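/- arXiv:2605.01375 — 4 statements merged into one kernel-verified Lean document; each statement's English description precedes it below -/
import Mathlib

section
/- For every bipartite density matrix ρ_AB on ℂ^{d_A} ⊗ ℂ^{d_B}, the squashed entanglement is upper-bounded by the entanglement of formation: E_sq(ρ_AB) ≤ E_F(ρ_AB). -/
open scoped Kronecker ComplexOrder

/-- Von Neumann entropy (natural logarithm) of a matrix, via its eigenvalues
(`0` if the matrix is not Hermitian; `Real.log 0 = 0` handles zero eigenvalues). -/
noncomputable def vN {n : Type*} [Fintype n] [DecidableEq n] (ρ : Matrix n n ℂ) : ℝ :=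
  if h : ρ.IsHermitian then -∑ i, h.eigenvalues i * Real.log (h.eigenvalues i) else 0

/-- Partial trace over the second tensor factor. -/
noncomputable def ptraceB {A B : Type*} [Fintype B] (ρ : Matrix (A × B) (A × B) ℂ) :
    Matrix A A ℂ := Matrix.of fun a a' => ∑ b, ρ (a, b) (a', b)

/-- Partial trace over the first tensor factor. -/
noncomputable def ptraceA {A B : Type*} [Fintype A] (ρ : Matrix (A × B) (A × B) ℂ) :
    Matrix B B ℂ := Matrix.of fun b b' => ∑ a, ρ (a, b) (a, b')

/-- Partial trace over the third factor of a tripartite system `A × B × C`. -/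
noncomputable def ptraceC3 {A B C : Type*} [Fintype C] (ρ : Matrix (A × B × C) (A × B × C) ℂ) :
    Matrix (A × B) (A × B) ℂ := Matrix.of fun x y => ∑ c, ρ (x.1, x.2, c) (y.1, y.2, c)

/-- Partial trace over the second factor of a tripartite system `A × B × C`. -/
noncomputable def ptraceB3 {A B C : Type*} [Fintype B] (ρ : Matrix (A × B × C) (A × B × C) ℂ) :
    Matrix (A × C) (A × C) ℂ := Matrix.of fun x y => ∑ b, ρ (x.1, b, x.2) (y.1, b, y.2)

/-- Conditional mutual information `I(A:B|C) = S(ρ_AC) + S(ρ_BC) − S(ρ_ABC) − S(ρ_C)`. -/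
noncomputable def condMutualInfo {A B C : Type*} [Fintype A] [DecidableEq A] [Fintype B]
    [DecidableEq B] [Fintype C] [DecidableEq C]
    (ρ : Matrix (A × B × C) (A × B × C) ℂ) : ℝ :=
  vN (ptraceB3 ρ) + vN (ptraceA ρ) - vN ρ - vN (ptraceA (ptraceA ρ))

/-- Squashed entanglement: `(1/2) inf I(A:B|C)` over all finite-dimensional extensions
`ρ_ABC` (density matrices with `Tr_C ρ_ABC = ρ_AB`). -/
noncomputable def Esq {A B : Type*} [Fintype A] [DecidableEq A] [Fintype B] [DecidableEq B]
    (ρAB : Matrix (A × B) (A × B) ℂ) : ℝ :=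
  sInf { x : ℝ | ∃ (dC : ℕ), 1 ≤ dC ∧
    ∃ ρ : Matrix (A × B × Fin dC) (A × B × Fin dC) ℂ,
      ρ.PosSemidef ∧ ρ.trace = 1 ∧ ptraceC3 ρ = ρAB ∧ x = (1 / 2) * condMutualInfo ρ }

/-- Entanglement of formation: infimum of the average local entropy over finite
pure-state ensembles realizing `ρAB` (entropies in natural logarithm). -/
noncomputable def EoF {A B : Type*} [Fintype A] [DecidableEq A] [Fintype B] [DecidableEq B]
    (ρAB : Matrix (A × B) (A × B) ℂ) : ℝ :=
  sInf { x : ℝ | ∃ (n : ℕ) (p : Fin n → ℝ) (ψ : Fin n → (A × B → ℂ)),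
    (∀ i, 0 ≤ p i) ∧ (∑ i, p i = 1) ∧ (∀ i, ∑ v, ‖ψ i v‖ ^ 2 = 1) ∧
    ρAB = ∑ i, (p i : ℂ) • Matrix.vecMulVec (ψ i) (star (ψ i)) ∧
    x = ∑ i, p i * vN (ptraceB (Matrix.vecMulVec (ψ i) (star (ψ i)))) }


namespace SqAux
open Matrix Polynomial
open scoped ComplexOrder


noncomputable def g (z : ℂ) : ℝ := z.re * Real.log z.re

lemma g_zero : g 0 = 0 := by simp [g]

variable {m : Type*} [Fintype m] [DecidableEq m]
variable {n : Type*} [Fintype n] [DecidableEq n]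


lemma eval_charpoly (M : Matrix m m ℂ) (r : ℂ) :
    M.charpoly.eval r = (r • (1 : Matrix m m ℂ) - M).det := by
  have h := RingHom.map_det (Polynomial.evalRingHom r) M.charmatrix
  simp only [coe_evalRingHom] at h
  rw [Matrix.charpoly, h]
  congr 1
  ext i j
  by_cases h : i = j <;>
    simp [h, charmatrix_apply, Matrix.one_apply, Matrix.diagonal_apply, smul_eq_mul,
      Matrix.sub_apply, Matrix.smul_apply]

/-- `X^|n| * charpoly (A*B) = X^|m| * charpoly (B*A)` for rectangular `A, B`. -/
lemma charpoly_mul_comm_pow [Nonempty m] [Nonempty n] (A : Matrix m n ℂ) (B : Matrix n m ℂ) :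
    X ^ (Fintype.card n) * (A * B).charpoly = X ^ (Fintype.card m) * (B * A).charpoly := by
  apply Polynomial.funext
  intro r
  simp only [eval_mul, eval_pow, eval_X, eval_charpoly]
  rcases eq_or_ne r 0 with hr | hr
  · simp [hr, zero_pow, Fintype.card_ne_zero]
  · have h1 : r • (1 : Matrix m m ℂ) - A * B = r • ((1 : Matrix m m ℂ) + ((-r⁻¹) • A) * B) := by
      rw [smul_add, Matrix.smul_mul, smul_smul, mul_neg, mul_inv_cancel₀ hr]
      simp [sub_eq_add_neg, Matrix.neg_mul]
    have h2 : r • (1 : Matrix n n ℂ) - B * A = r • ((1 : Matrix n n ℂ) + B * ((-r⁻¹) • A)) := by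
      rw [smul_add, Matrix.mul_smul, smul_smul, mul_neg, mul_inv_cancel₀ hr]
      simp [sub_eq_add_neg, Matrix.mul_neg]
    rw [h1, h2, Matrix.det_smul, Matrix.det_smul, Matrix.det_one_add_mul_comm]
    ring


lemma charpoly_unitary_conj (U B : Matrix m m ℂ) (hU : U * star U = 1) :
    (U * B * star U).charpoly = B.charpoly := by
  have hsc : Matrix.scalar m (X : ℂ[X]) = (X : ℂ[X]) • (1 : Matrix m m ℂ[X]) := by
    ext i j
    by_cases h : i = j <;> simp [h, Matrix.scalar_apply, Matrix.one_apply, Matrix.diagonal_apply]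
  have hmul : (U.map (C : ℂ →+* ℂ[X])) * ((star U).map (C : ℂ →+* ℂ[X])) = 1 := by
    rw [← Matrix.map_mul, hU, Matrix.map_one] <;> simp
  have hcm : charmatrix (U * B * star U) =
      (U.map (C : ℂ →+* ℂ[X])) * charmatrix B * ((star U).map (C : ℂ →+* ℂ[X])) := by
    rw [charmatrix, charmatrix, hsc]
    rw [Matrix.mul_sub, Matrix.sub_mul]
    congr 1
    · rw [Matrix.mul_smul, Matrix.mul_one, Matrix.smul_mul, hmul]
    · simp only [RingHom.mapMatrix_apply, ← Matrix.map_mul]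
  rw [Matrix.charpoly, Matrix.charpoly, hcm, det_mul, det_mul]
  have hdet : det (U.map (C : ℂ →+* ℂ[X])) * det ((star U).map (C : ℂ →+* ℂ[X])) = 1 := by
    rw [← det_mul, hmul, det_one]
  calc det (U.map (C : ℂ →+* ℂ[X])) * det (charmatrix B) * det ((star U).map (C : ℂ →+* ℂ[X]))
      = det (U.map (C : ℂ →+* ℂ[X])) * det ((star U).map (C : ℂ →+* ℂ[X])) * det (charmatrix B) := by
        ring
    _ = det (charmatrix B) := by rw [hdet, one_mul]

lemma charpoly_diagonal (v : m → ℂ) :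
    (Matrix.diagonal v).charpoly = ∏ i, (X - C (v i)) := by
  have : charmatrix (Matrix.diagonal v) = Matrix.diagonal (fun i => X - C (v i)) := by
    ext i j
    by_cases h : i = j <;>
      simp [h, charmatrix_apply, Matrix.diagonal_apply]
  rw [Matrix.charpoly, this, det_diagonal]

lemma roots_charpoly_diagonal (v : m → ℂ) :
    (Matrix.diagonal v).charpoly.roots = Finset.univ.val.map v := by
  rw [charpoly_diagonal, Finset.prod_eq_multiset_prod,
    show (Multiset.map (fun i => X - C (v i)) Finset.univ.val)
      = (Finset.univ.val.map v).map (fun a => X - C a) by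
        rw [Multiset.map_map]; rfl,
    roots_multiset_prod_X_sub_C]

lemma roots_charpoly_of_isHermitian (A : Matrix m m ℂ) (hA : A.IsHermitian) :
    A.charpoly.roots = Finset.univ.val.map (fun i => (hA.eigenvalues i : ℂ)) := by
  have hU :(hA.eigenvectorUnitary : Matrix m m ℂ) * star (hA.eigenvectorUnitary : Matrix m m ℂ)
      = 1 := by
    simp only [SetLike.coe_mem, Matrix.mem_unitaryGroup_iff.mp hA.eigenvectorUnitary.2]
  have h1 : A.charpoly
      = (Matrix.diagonal (RCLike.ofReal ∘ hA.eigenvalues) : Matrix m m ℂ).charpoly := by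
    conv_lhs => rw [hA.spectral_theorem]
    exact charpoly_unitary_conj _ _ hU
  rw [h1, roots_charpoly_diagonal]
  rfl

lemma vN_eq_neg_sum_g_roots (A : Matrix m m ℂ) (hA : A.IsHermitian) :
    vN A = -(A.charpoly.roots.map g).sum := by
  rw [vN, dif_pos hA, roots_charpoly_of_isHermitian A hA, Multiset.map_map]
  have hfun : (g ∘ fun i => (hA.eigenvalues i : ℂ))
      = fun i => hA.eigenvalues i * Real.log (hA.eigenvalues i) := by
    funext i; simp [g]
  rw [hfun, Finset.sum_eq_multiset_sum]

lemma sum_g_pad (k : ℕ) (s : Multiset ℂ) :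
    (((k • ({0} : Multiset ℂ)) + s).map g).sum = (s.map g).sum := by
  rw [Multiset.map_add, Multiset.sum_add, Multiset.map_nsmul, Multiset.map_singleton, g_zero]
  simp [Multiset.nsmul_singleton, Multiset.sum_replicate]

lemma vN_eq_of_charpoly_pow {A : Matrix m m ℂ} {B : Matrix n n ℂ}
    (hA : A.IsHermitian) (hB : B.IsHermitian) {a b : ℕ}
    (h : X ^ a * A.charpoly = X ^ b * B.charpoly) : vN A = vN B := by
  rw [vN_eq_neg_sum_g_roots A hA, vN_eq_neg_sum_g_roots B hB]
  have hA0 : (X : ℂ[X]) ^ a * A.charpoly ≠ 0 :=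
    mul_ne_zero (pow_ne_zero _ X_ne_zero) (A.charpoly_monic.ne_zero)
  have hB0 : (X : ℂ[X]) ^ b * B.charpoly ≠ 0 :=
    mul_ne_zero (pow_ne_zero _ X_ne_zero) (B.charpoly_monic.ne_zero)
  have h1 : (X ^ a * A.charpoly).roots = (X ^ b * B.charpoly).roots := by rw [h]
  rw [roots_mul hA0, roots_mul hB0, roots_X_pow, roots_X_pow] at h1
  have h2 := congrArg (fun s : Multiset ℂ => (s.map g).sum) h1
  simp only [sum_g_pad] at h2
  exact congrArg Neg.neg h2

lemma charpoly_blockDiagonal {o : Type*} [Fintype o] [DecidableEq o]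
    (M : o → Matrix m m ℂ) :
    (Matrix.blockDiagonal M).charpoly = ∏ c, (M c).charpoly := by
  have hcm : charmatrix (Matrix.blockDiagonal M)
      = Matrix.blockDiagonal (fun c => charmatrix (M c)) := by
    ext ⟨i, c⟩ ⟨j, c'⟩
    by_cases h : c = c'
    · subst h
      by_cases hij : i = j <;>
        simp [charmatrix_apply, Matrix.blockDiagonal_apply, Matrix.diagonal_apply, hij,
          Prod.ext_iff]
    · simp [charmatrix_apply, Matrix.blockDiagonal_apply, h, Matrix.diagonal_apply,
        Prod.ext_iff]
  rw [Matrix.charpoly, hcm, Matrix.det_blockDiagonal]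
  rfl

lemma vN_blockDiagonal {o : Type*} [Fintype o] [DecidableEq o]
    (M : o → Matrix m m ℂ) (h : ∀ c, (M c).IsHermitian) :
    vN (Matrix.blockDiagonal M) = ∑ c, vN (M c) := by
  have hherm : (Matrix.blockDiagonal M).IsHermitian := by
    rw [Matrix.IsHermitian, Matrix.blockDiagonal_conjTranspose]
    exact congrArg Matrix.blockDiagonal (funext fun c => h c)
  rw [vN_eq_neg_sum_g_roots _ hherm, charpoly_blockDiagonal]
  have hne : ∀ c ∈ Finset.univ, (M c).charpoly ≠ 0 := fun c _ => (M c).charpoly_monic.ne_zero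
  rw [roots_prod _ _ (Finset.prod_ne_zero_iff.mpr hne), Multiset.map_bind, Multiset.sum_bind]
  rw [show ∑ c, vN (M c) = ∑ c, -(((M c).charpoly.roots.map g).sum) from
    Finset.sum_congr rfl fun c _ => vN_eq_neg_sum_g_roots _ (h c)]
  rw [Finset.sum_eq_multiset_sum, ← Multiset.sum_map_neg']
  congr 1
  rw [Multiset.map_map]
  rfl

lemma charpoly_transpose (M : Matrix m m ℂ) : Mᵀ.charpoly = M.charpoly := by
  have : charmatrix Mᵀ = (charmatrix M)ᵀ := by
    ext i j
    by_cases h : i = j <;> simp [charmatrix_apply, Matrix.diagonal_apply, h, eq_comm]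
  rw [Matrix.charpoly, this, Matrix.det_transpose, Matrix.charpoly]

lemma sum_f_eig_of_decomp {A : Matrix m m ℂ} (hA : A.IsHermitian) (U : Matrix m m ℂ)
    (hU : U * star U = 1) (d : m → ℝ)
    (hdec : A = U * Matrix.diagonal (fun i => (d i : ℂ)) * star U)
    (f : ℝ → ℝ) : ∑ i, f (hA.eigenvalues i) = ∑ i, f (d i) := by
  have h1 : A.charpoly.roots = Finset.univ.val.map (fun i => (d i : ℂ)) := by
    conv_lhs => rw [hdec]
    rw [charpoly_unitary_conj _ _ hU, roots_charpoly_diagonal]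
  have h2 := roots_charpoly_of_isHermitian A hA
  have h3 : Finset.univ.val.map (fun i => (hA.eigenvalues i : ℂ))
      = Finset.univ.val.map (fun i => (d i : ℂ)) := by rw [← h2, h1]
  have h4 := congrArg (fun s : Multiset ℂ => (s.map (fun z => f z.re)).sum) h3
  simp only [Multiset.map_map] at h4
  have e1 : ((fun z : ℂ => f z.re) ∘ fun i => ((hA.eigenvalues i : ℝ) : ℂ))
      = fun i => f (hA.eigenvalues i) := by
    funext i; rfl
  have e2 : ((fun z : ℂ => f z.re) ∘ fun i => ((d i : ℝ) : ℂ)) = fun i => f (d i) := by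
    funext i; rfl
  rw [e1, e2] at h4
  rw [Finset.sum_eq_multiset_sum, Finset.sum_eq_multiset_sum]
  exact h4

lemma vN_diagonal_real (d : m → ℝ) :
    vN (Matrix.diagonal (fun i => (d i : ℂ))) = -∑ i, d i * Real.log (d i) := by
  have hherm : (Matrix.diagonal (fun i => (d i : ℂ))).IsHermitian := by
    have hv : (star fun i => ((d i : ℝ) : ℂ)) = fun i => ((d i : ℝ) : ℂ) := by
      funext i
      simp [Complex.star_def, Complex.conj_ofReal]
    rw [Matrix.IsHermitian, Matrix.diagonal_conjTranspose, hv]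
  rw [vN, dif_pos hherm]
  have := sum_f_eig_of_decomp hherm 1 (by simp) d (by simp)
    (fun x => x * Real.log x)
  rw [this]

lemma trace_eq_sum_eigenvalues {A : Matrix m m ℂ} (hA : A.IsHermitian) :
    A.trace = ((∑ i, hA.eigenvalues i : ℝ) : ℂ) := by
  conv_lhs => rw [hA.spectral_theorem]
  rw [Unitary.conjStarAlgAut_apply, Matrix.trace_mul_cycle]
  have hU : star (hA.eigenvectorUnitary : Matrix m m ℂ) * (hA.eigenvectorUnitary : Matrix m m ℂ)
      = 1 := by
    simp only [SetLike.coe_mem, Matrix.mem_unitaryGroup_iff'.mp hA.eigenvectorUnitary.2]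
  rw [hU, Matrix.one_mul, Matrix.trace_diagonal]
  push_cast
  rfl

lemma vN_smul_posSemidef {S : Matrix m m ℂ} (hS : S.PosSemidef) {p : ℝ} (hp : 0 ≤ p) :
    vN ((p : ℂ) • S) = p * vN S - p * Real.log p * S.trace.re := by
  have hA := hS.1
  have hherm : ((p : ℂ) • S).IsHermitian := by
    rw [Matrix.IsHermitian, Matrix.conjTranspose_smul, hA]
    simp [Complex.star_def, Complex.conj_ofReal]
  have hdec : (p : ℂ) • S
      = (hA.eigenvectorUnitary : Matrix m m ℂ)
        * Matrix.diagonal (fun i => ((p * hA.eigenvalues i : ℝ) : ℂ))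
        * star (hA.eigenvectorUnitary : Matrix m m ℂ) := by
    conv_lhs => rw [hA.spectral_theorem]
    rw [Unitary.conjStarAlgAut_apply, ← Matrix.smul_mul, ← Matrix.mul_smul, ← Matrix.diagonal_smul]
    have hdd : ((p : ℂ) • (RCLike.ofReal ∘ hA.eigenvalues) : m → ℂ)
        = fun i => ((p * hA.eigenvalues i : ℝ) : ℂ) := by
      funext i
      show (p : ℂ) * (hA.eigenvalues i : ℂ) = ((p * hA.eigenvalues i : ℝ) : ℂ)
      push_cast
      ring
    rw [hdd]
  have hU : (hA.eigenvectorUnitary : Matrix m m ℂ) * star (hA.eigenvectorUnitary : Matrix m m ℂ)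
      = 1 := by
    simp only [SetLike.coe_mem, Matrix.mem_unitaryGroup_iff.mp hA.eigenvectorUnitary.2]
  rw [vN, dif_pos hherm,
    sum_f_eig_of_decomp hherm _ hU _ hdec (fun x => x * Real.log x)]
  have htr : S.trace.re = ∑ i, hA.eigenvalues i := by
    rw [trace_eq_sum_eigenvalues hA, Complex.ofReal_re]
  rw [vN, dif_pos hA, htr]
  have hpt : ∀ i, (p * hA.eigenvalues i) * Real.log (p * hA.eigenvalues i)
      = p * (hA.eigenvalues i * Real.log (hA.eigenvalues i))
        + (p * Real.log p) * hA.eigenvalues i := by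
    intro i
    have hx := hS.eigenvalues_nonneg i
    rcases eq_or_lt_of_le hp with hp0 | hp0
    · simp [← hp0]
    rcases eq_or_lt_of_le hx with hx0 | hx0
    · simp [← hx0]
    rw [Real.log_mul (ne_of_gt hp0) (ne_of_gt hx0)]
    ring
  rw [Finset.sum_congr rfl fun i _ => hpt i, Finset.sum_add_distrib, ← Finset.mul_sum,
    ← Finset.mul_sum]
  ring

lemma vN_nonneg {S : Matrix m m ℂ} (hS : S.PosSemidef) (htr : S.trace = 1) : 0 ≤ vN S := by
  have hA := hS.1
  rw [vN, dif_pos hA]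
  have hsum : ∑ i, hA.eigenvalues i = 1 := by
    have := trace_eq_sum_eigenvalues hA
    rw [htr] at this
    exact_mod_cast this.symm
  rw [neg_nonneg]
  apply Finset.sum_nonpos
  intro i _
  have h0 := hS.eigenvalues_nonneg i
  have h1 : hA.eigenvalues i ≤ 1 := by
    rw [← hsum]
    exact Finset.single_le_sum (fun j _ => hS.eigenvalues_nonneg j) (Finset.mem_univ i)
  rcases eq_or_lt_of_le h0 with h | h
  · simp [← h]
  · exact mul_nonpos_of_nonneg_of_nonpos (le_of_lt h) (Real.log_nonpos h0 h1)


lemma sum_mul_star {V : Type*} [Fintype V] (ψ : V → ℂ) :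
    ∑ v, ψ v * star (ψ v) = ((∑ v, ‖ψ v‖ ^ 2 : ℝ) : ℂ) := by
  push_cast
  apply Finset.sum_congr rfl
  intro v _
  simp [Complex.star_def, Complex.mul_conj, Complex.normSq_eq_norm_sq]

lemma trace_gram {A B : Type*} [Fintype A] [Fintype B] (ψ : A × B → ℂ) :
    ((Matrix.of fun (a : A) (b : B) => ψ (a, b))
      * (Matrix.of fun (a : A) (b : B) => ψ (a, b))ᴴ).trace
      = ((∑ v, ‖ψ v‖ ^ 2 : ℝ) : ℂ) := by
  rw [Matrix.trace, ← sum_mul_star ψ, Fintype.sum_prod_type]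
  apply Finset.sum_congr rfl
  intro a _
  simp [Matrix.diag, Matrix.mul_apply, Matrix.conjTranspose_apply]

lemma ptraceB_vecMulVec {A B : Type*} [Fintype A] [Fintype B] (ψ : A × B → ℂ) :
    ptraceB (Matrix.vecMulVec ψ (star ψ))
      = (Matrix.of fun (a : A) (b : B) => ψ (a, b))
        * (Matrix.of fun (a : A) (b : B) => ψ (a, b))ᴴ := by
  ext a a'
  simp [ptraceB, Matrix.mul_apply, Matrix.vecMulVec_apply, Matrix.conjTranspose_apply]

lemma local_entropy_nonneg {A B : Type*} [Fintype A] [DecidableEq A] [Fintype B] [DecidableEq B]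
    (ψ : A × B → ℂ) (hnorm : ∑ v, ‖ψ v‖ ^ 2 = 1) :
    0 ≤ vN (ptraceB (Matrix.vecMulVec ψ (star ψ))) := by
  rw [ptraceB_vecMulVec]
  apply vN_nonneg (Matrix.posSemidef_self_mul_conjTranspose _)
  rw [Matrix.trace]
  have : ∑ a, ((Matrix.of fun (a : A) (b : B) => ψ (a, b))
      * (Matrix.of fun (a : A) (b : B) => ψ (a, b))ᴴ).diag a
      = ∑ v : A × B, ψ v * star (ψ v) := by
    rw [Fintype.sum_prod_type]
    apply Finset.sum_congr rfl
    intro a _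
    simp [Matrix.diag, Matrix.mul_apply, Matrix.conjTranspose_apply]
  rw [this, sum_mul_star, hnorm]
  norm_num

/-- The central construction: given a pure-state ensemble, the classically-extended state
has conditional mutual information equal to twice the average local entropy. -/
lemma ensemble_extension {A B : Type*} [Fintype A] [DecidableEq A] [Fintype B] [DecidableEq B]
    [Nonempty A] [Nonempty B] (n : ℕ) (p : Fin n → ℝ) (ψ : Fin n → (A × B → ℂ))
    (hp : ∀ i, 0 ≤ p i) (hps : ∑ i, p i = 1) (hnorm : ∀ i, ∑ v, ‖ψ i v‖ ^ 2 = 1) :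
    ∃ ρ : Matrix (A × B × Fin n) (A × B × Fin n) ℂ,
      ρ.PosSemidef ∧ ρ.trace = 1 ∧
      ptraceC3 ρ = ∑ i, (p i : ℂ) • Matrix.vecMulVec (ψ i) (star (ψ i)) ∧
      condMutualInfo ρ = 2 * ∑ i, p i * vN (ptraceB (Matrix.vecMulVec (ψ i) (star (ψ i)))) := by
  classical
  set φ : Fin n → (A × B → ℂ) := fun c v => ((Real.sqrt (p c) : ℝ) : ℂ) * ψ c v with hφ_def
  set K : Fin n → Matrix (A × B) (A × B) ℂ :=
    fun c => Matrix.vecMulVec (φ c) (star (φ c)) with hK_def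
  set Cl : Fin n → Matrix (A × B) (Fin 1) ℂ := fun c => Matrix.replicateCol (Fin 1) (φ c) with hCl_def
  have hsq : ∀ c, ((Real.sqrt (p c) : ℝ) : ℂ) * ((Real.sqrt (p c) : ℝ) : ℂ)
      = ((p c : ℝ) : ℂ) := by
    intro c
    rw [← Complex.ofReal_mul, Real.mul_self_sqrt (hp c)]
  have hstarsq : ∀ c, star ((Real.sqrt (p c) : ℝ) : ℂ) = ((Real.sqrt (p c) : ℝ) : ℂ) := by
    intro c
    rw [Complex.star_def, Complex.conj_ofReal]
  have hKcol : ∀ c, K c = Cl c * (Cl c)ᴴ := by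
    intro c
    rw [hK_def, hCl_def]
    simp only
    rw [Matrix.vecMulVec_eq (Fin 1), Matrix.conjTranspose_replicateCol]
    rfl
  have hφnorm : ∀ c, ∑ v, φ c v * star (φ c v) = ((p c : ℝ) : ℂ) := by
    intro c
    rw [sum_mul_star]
    norm_cast
    have hterm : ∀ v, ‖φ c v‖ ^ 2 = p c * ‖ψ c v‖ ^ 2 := by
      intro v
      rw [hφ_def]
      simp only
      rw [norm_mul, mul_pow, Complex.norm_real, Real.norm_eq_abs, sq_abs, Real.sq_sqrt (hp c)]
    rw [Finset.sum_congr rfl fun v _ => hterm v, ← Finset.mul_sum, hnorm c, mul_one]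
  set e : (A × B) × Fin n ≃ A × (B × Fin n) := Equiv.prodAssoc A B (Fin n) with he_def
  set ρ : Matrix (A × B × Fin n) (A × B × Fin n) ℂ :=
    (Matrix.blockDiagonal K).submatrix e.symm e.symm with hρ_def
  have hent : ∀ (a a' : A) (b b' : B) (c c' : Fin n),
      ρ (a, b, c) (a', b', c') = Matrix.blockDiagonal K ((a, b), c) ((a', b'), c') := by
    intro a a' b b' c c'
    rfl
  -- positive semidefiniteness
  have hKpsd : ∀ c, (K c).PosSemidef := by
    intro c
    rw [hKcol c]
    exact Matrix.posSemidef_self_mul_conjTranspose _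
  have hBDcol : Matrix.blockDiagonal K
      = Matrix.blockDiagonal Cl * (Matrix.blockDiagonal Cl)ᴴ := by
    rw [Matrix.blockDiagonal_conjTranspose, ← Matrix.blockDiagonal_mul]
    exact congrArg Matrix.blockDiagonal (funext fun c => hKcol c)
  have hBDpsd : (Matrix.blockDiagonal K).PosSemidef := by
    rw [hBDcol]
    exact Matrix.posSemidef_self_mul_conjTranspose _
  have hρpsd : ρ.PosSemidef := hBDpsd.submatrix _
  refine ⟨ρ, hρpsd, ?_, ?_, ?_⟩
  · -- trace
    have h1 : ρ.trace = (Matrix.blockDiagonal K).trace := by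
      rw [Matrix.trace, Matrix.trace]
      exact Fintype.sum_equiv e.symm _ _ (fun x => rfl)
    rw [h1, Matrix.trace_blockDiagonal]
    have h2 : ∀ c, (K c).trace = ((p c : ℝ) : ℂ) := by
      intro c
      rw [Matrix.trace]
      calc ∑ v, (K c).diag v = ∑ v, φ c v * star (φ c v) := by
            apply Finset.sum_congr rfl
            intro v _
            simp [hK_def, Matrix.diag, Matrix.vecMulVec_apply]
        _ = _ := hφnorm c
    rw [Finset.sum_congr rfl fun c _ => h2 c, ← Complex.ofReal_sum, hps, Complex.ofReal_one]
  · -- partial trace over C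
    ext x y
    rw [ptraceC3, Matrix.of_apply, Matrix.sum_apply]
    apply Finset.sum_congr rfl
    intro c _
    rw [hent x.1 y.1 x.2 y.2 c c, Matrix.blockDiagonal_apply_eq]
    simp only [hK_def, Matrix.smul_apply, Matrix.vecMulVec_apply, Pi.star_apply, smul_eq_mul,
      hφ_def]
    calc (((Real.sqrt (p c) : ℝ) : ℂ) * ψ c (x.1, x.2))
          * star (((Real.sqrt (p c) : ℝ) : ℂ) * ψ c (y.1, y.2))
        = (((Real.sqrt (p c) : ℝ) : ℂ) * ((Real.sqrt (p c) : ℝ) : ℂ))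
          * (ψ c (x.1, x.2) * star (ψ c (y.1, y.2))) := by
          rw [star_mul', hstarsq c]
          ring
      _ = ((p c : ℝ) : ℂ) * (ψ c x * star (ψ c y)) := by rw [hsq c]
  · -- conditional mutual information
    set M0 : Fin n → Matrix A B ℂ := fun c => Matrix.of fun a b => ψ c (a, b) with hM0_def
    set Nm : Fin n → Matrix A B ℂ := fun c => Matrix.of fun a b => φ c (a, b) with hNm_def
    have hNsmul : ∀ c, Nm c = ((Real.sqrt (p c) : ℝ) : ℂ) • M0 c := by
      intro c
      ext a b
      simp [hNm_def, hM0_def, hφ_def]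
    set σA : Fin n → Matrix A A ℂ := fun c => Nm c * (Nm c)ᴴ with hσA_def
    set σB : Fin n → Matrix B B ℂ := fun c => (Nm c)ᵀ * ((Nm c)ᵀ)ᴴ with hσB_def
    -- identification of the partial traces
    have hAC : ptraceB3 ρ = Matrix.blockDiagonal σA := by
      ext x y
      rcases x with ⟨a, c⟩
      rcases y with ⟨a', c'⟩
      rw [ptraceB3, Matrix.of_apply]
      by_cases h : c = c'
      · subst h
        rw [Matrix.blockDiagonal_apply_eq, hσA_def]
        simp only
        rw [Matrix.mul_apply]
        apply Finset.sum_congr rfl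
        intro b _
        rw [hent a a' b b c c, Matrix.blockDiagonal_apply_eq]
        simp [hK_def, Matrix.vecMulVec_apply, hNm_def, Matrix.conjTranspose_apply]
      · rw [Matrix.blockDiagonal_apply_ne _ _ _ h]
        apply Finset.sum_eq_zero
        intro b _
        rw [hent a a' b b c c', Matrix.blockDiagonal_apply_ne _ _ _ h]
    have hBC : ptraceA ρ = Matrix.blockDiagonal σB := by
      ext x y
      rcases x with ⟨b, c⟩
      rcases y with ⟨b', c'⟩
      rw [ptraceA, Matrix.of_apply]
      by_cases h : c = c'
      · subst h
        rw [Matrix.blockDiagonal_apply_eq, hσB_def]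
        simp only
        rw [Matrix.mul_apply]
        apply Finset.sum_congr rfl
        intro a _
        rw [hent a a b b' c c, Matrix.blockDiagonal_apply_eq]
        simp [hK_def, Matrix.vecMulVec_apply, hNm_def, Matrix.conjTranspose_apply,
          Matrix.transpose_apply]
      · rw [Matrix.blockDiagonal_apply_ne _ _ _ h]
        apply Finset.sum_eq_zero
        intro a _
        rw [hent a a b b' c c', Matrix.blockDiagonal_apply_ne _ _ _ h]
    have hC : ptraceA (ptraceA ρ) = Matrix.diagonal (fun c => ((p c : ℝ) : ℂ)) := by
      rw [hBC]
      ext c c'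
      rw [ptraceA, Matrix.of_apply]
      by_cases h : c = c'
      · subst h
        rw [Matrix.diagonal_apply_eq]
        calc ∑ b, Matrix.blockDiagonal σB (b, c) (b, c)
            = ∑ b, σB c b b := by
              apply Finset.sum_congr rfl
              intro b _
              rw [Matrix.blockDiagonal_apply_eq]
          _ = ∑ v : A × B, φ c v * star (φ c v) := by
              rw [Fintype.sum_prod_type, Finset.sum_comm]
              apply Finset.sum_congr rfl
              intro b _
              rw [hσB_def]
              simp only
              rw [Matrix.mul_apply]
              apply Finset.sum_congr rfl
              intro a _
              simp [hNm_def, Matrix.conjTranspose_apply, Matrix.transpose_apply]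
          _ = _ := hφnorm c
      · rw [Matrix.diagonal_apply_ne _ h]
        apply Finset.sum_eq_zero
        intro b _
        rw [Matrix.blockDiagonal_apply_ne _ _ _ h]
    -- entropy of the full state
    have hvNK : ∀ c, vN (K c) = -(p c * Real.log (p c)) := by
      intro c
      have hdiag : (Cl c)ᴴ * Cl c = Matrix.diagonal (fun _ : Fin 1 => ((p c : ℝ) : ℂ)) := by
        ext i j
        have hij : i = j := Subsingleton.elim i j
        subst hij
        rw [Matrix.diagonal_apply_eq, Matrix.mul_apply]
        calc ∑ v, (Cl c)ᴴ i v * Cl c v i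
            = ∑ v, φ c v * star (φ c v) := by
              apply Finset.sum_congr rfl
              intro v _
              rw [Matrix.conjTranspose_apply, hCl_def]
              simp only [Matrix.replicateCol_apply]
              ring
          _ = _ := hφnorm c
      have hrel := charpoly_mul_comm_pow (Cl c) ((Cl c)ᴴ)
      have h1 : vN (K c) = vN ((Cl c)ᴴ * Cl c) := by
        apply vN_eq_of_charpoly_pow (hKpsd c).1
          (Matrix.posSemidef_conjTranspose_mul_self _).1
        rw [hKcol c]
        exact hrel
      rw [h1, hdiag, vN_diagonal_real (fun _ : Fin 1 => p c)]
      simp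
    have hvNρ : vN ρ = -∑ c, p c * Real.log (p c) := by
      have h1 : vN ρ = vN (Matrix.blockDiagonal K) := by
        apply vN_eq_of_charpoly_pow hρpsd.1 hBDpsd.1 (a := 0) (b := 0)
        rw [pow_zero, one_mul, one_mul, hρ_def]
        have h2 : (Matrix.blockDiagonal K).submatrix ⇑e.symm ⇑e.symm
            = Matrix.reindex e e (Matrix.blockDiagonal K) := rfl
        rw [h2, Matrix.charpoly_reindex]
      rw [h1, vN_blockDiagonal K (fun c => (hKpsd c).1),
        Finset.sum_congr rfl fun c _ => hvNK c]
      rw [Finset.sum_neg_distrib]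
    have hvNC : vN (ptraceA (ptraceA ρ)) = -∑ c, p c * Real.log (p c) := by
      rw [hC]
      exact vN_diagonal_real p
    -- entropy of the AC reduction
    have hσsmul : ∀ c, σA c = ((p c : ℝ) : ℂ) • (M0 c * (M0 c)ᴴ) := by
      intro c
      rw [hσA_def]
      simp only
      rw [hNsmul c, Matrix.conjTranspose_smul, Matrix.smul_mul, Matrix.mul_smul, smul_smul,
        hstarsq c, hsq c]
    have htrM0 : ∀ c, (M0 c * (M0 c)ᴴ).trace = 1 := by
      intro c
      rw [hM0_def]
      simp only
      rw [trace_gram (ψ c), hnorm c, Complex.ofReal_one]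
    have hσ0ptr : ∀ c, ptraceB (Matrix.vecMulVec (ψ c) (star (ψ c))) = M0 c * (M0 c)ᴴ := by
      intro c
      rw [ptraceB_vecMulVec, hM0_def]
    have hvNσA : ∀ c, vN (σA c)
        = p c * vN (ptraceB (Matrix.vecMulVec (ψ c) (star (ψ c))))
          - p c * Real.log (p c) := by
      intro c
      rw [hσsmul c, vN_smul_posSemidef (Matrix.posSemidef_self_mul_conjTranspose (M0 c)) (hp c),
        htrM0 c, hσ0ptr c]
      norm_num
    have hvNAC : vN (ptraceB3 ρ)
        = (∑ c, p c * vN (ptraceB (Matrix.vecMulVec (ψ c) (star (ψ c)))))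
          - ∑ c, p c * Real.log (p c) := by
      rw [hAC, vN_blockDiagonal σA
        (fun c => (Matrix.posSemidef_self_mul_conjTranspose (Nm c)).1),
        Finset.sum_congr rfl fun c _ => hvNσA c, Finset.sum_sub_distrib]
    -- entropy of the BC reduction equals that of the AC reduction, blockwise
    have hvNσB : ∀ c, vN (σB c) = vN (σA c) := by
      intro c
      apply vN_eq_of_charpoly_pow (Matrix.posSemidef_self_mul_conjTranspose ((Nm c)ᵀ)).1
        (Matrix.posSemidef_self_mul_conjTranspose (Nm c)).1
      have hrel := charpoly_mul_comm_pow ((Nm c)ᵀ) (((Nm c)ᵀ)ᴴ)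
      have h2 : ((Nm c)ᵀ)ᴴ * (Nm c)ᵀ = (Nm c * (Nm c)ᴴ)ᵀ := by
        ext a a'
        rw [Matrix.mul_apply, Matrix.transpose_apply, Matrix.mul_apply]
        apply Finset.sum_congr rfl
        intro b _
        rw [Matrix.conjTranspose_apply, Matrix.transpose_apply, Matrix.transpose_apply,
          Matrix.conjTranspose_apply]
        ring
      rw [h2, charpoly_transpose] at hrel
      exact hrel
    have hvNBC : vN (ptraceA ρ)
        = (∑ c, p c * vN (ptraceB (Matrix.vecMulVec (ψ c) (star (ψ c)))))
          - ∑ c, p c * Real.log (p c) := by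
      rw [hBC, vN_blockDiagonal σB
        (fun c => (Matrix.posSemidef_self_mul_conjTranspose ((Nm c)ᵀ)).1),
        Finset.sum_congr rfl fun c _ => (hvNσB c).trans (hvNσA c), Finset.sum_sub_distrib]
    rw [condMutualInfo, hvNAC, hvNBC, hvNρ, hvNC]
    ring

end SqAux

/-- for every bipartite density matrix, the squashed entanglement is
upper-bounded by the entanglement of formation: `E_sq(ρ_AB) ≤ E_F(ρ_AB)`. -/
theorem squashed_le_formation
    (dA dB : ℕ)
    (ρAB : Matrix (Fin dA × Fin dB) (Fin dA × Fin dB) ℂ)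
    (hρ : ρAB.PosSemidef) (htr : ρAB.trace = 1) :
    Esq ρAB ≤ EoF ρAB := by
  have hAB : Nonempty (Fin dA × Fin dB) := by
    by_contra h
    rw [not_nonempty_iff] at h
    rw [Matrix.trace, Finset.univ_eq_empty, Finset.sum_empty] at htr
    exact zero_ne_one htr
  have hA1 : Nonempty (Fin dA) := ⟨hAB.some.1⟩
  have hB1 : Nonempty (Fin dB) := ⟨hAB.some.2⟩
  rw [Esq, EoF]
  -- the EoF ensemble set is contained in the Esq extension set
  have hsub : {x : ℝ | ∃ (n : ℕ) (p : Fin n → ℝ) (ψ : Fin n → (Fin dA × Fin dB → ℂ)),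
      (∀ i, 0 ≤ p i) ∧ (∑ i, p i = 1) ∧ (∀ i, ∑ v, ‖ψ i v‖ ^ 2 = 1) ∧
      ρAB = ∑ i, (p i : ℂ) • Matrix.vecMulVec (ψ i) (star (ψ i)) ∧
      x = ∑ i, p i * vN (ptraceB (Matrix.vecMulVec (ψ i) (star (ψ i))))} ⊆
      {x : ℝ | ∃ (dC : ℕ), 1 ≤ dC ∧
      ∃ ρ : Matrix (Fin dA × Fin dB × Fin dC) (Fin dA × Fin dB × Fin dC) ℂ,
        ρ.PosSemidef ∧ ρ.trace = 1 ∧ ptraceC3 ρ = ρAB ∧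
        x = (1 / 2) * condMutualInfo ρ} := by
    rintro x ⟨n, p, ψ, hp, hps, hnorm, hdec, hx⟩
    obtain ⟨ρC, hpsd, htr1, hptr, hcmi⟩ := SqAux.ensemble_extension n p ψ hp hps hnorm
    have hn : 1 ≤ n := by
      rcases Nat.eq_zero_or_pos n with h0 | h0
      · exfalso
        subst h0
        simp at hps
      · exact h0
    exact ⟨n, hn, ρC, hpsd, htr1, by rw [hptr, ← hdec], by rw [hcmi, hx]; ring⟩
  -- the EoF ensemble set is nonempty (spectral decomposition)
  have hH := hρ.1
  have hFne : ∃ x : ℝ, ∃ (n : ℕ) (p : Fin n → ℝ) (ψ : Fin n → (Fin dA × Fin dB → ℂ)),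
      (∀ i, 0 ≤ p i) ∧ (∑ i, p i = 1) ∧ (∀ i, ∑ v, ‖ψ i v‖ ^ 2 = 1) ∧
      ρAB = ∑ i, (p i : ℂ) • Matrix.vecMulVec (ψ i) (star (ψ i)) ∧
      x = ∑ i, p i * vN (ptraceB (Matrix.vecMulVec (ψ i) (star (ψ i)))) := by
    classical
    set U : Matrix (Fin dA × Fin dB) (Fin dA × Fin dB) ℂ :=
      (hH.eigenvectorUnitary : Matrix (Fin dA × Fin dB) (Fin dA × Fin dB) ℂ) with hU_def
    have hUstar : star U * U = 1 := by
      simp only [hU_def, SetLike.coe_mem, Matrix.mem_unitaryGroup_iff'.mp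
        hH.eigenvectorUnitary.2]
    set e : Fin (dA * dB) ≃ Fin dA × Fin dB := finProdFinEquiv.symm with he_def
    refine ⟨_, dA * dB, fun i => hH.eigenvalues (e i), fun i v => U v (e i),
      fun i => hρ.eigenvalues_nonneg _, ?_, ?_, ?_, rfl⟩
    · rw [Equiv.sum_comp e hH.eigenvalues]
      have h1 := SqAux.trace_eq_sum_eigenvalues hH
      rw [htr] at h1
      exact_mod_cast h1.symm
    · intro i
      have h1 : (star U * U) (e i) (e i) = 1 := by rw [hUstar]; simp
      rw [Matrix.mul_apply] at h1
      have h2 : ∑ v, U v (e i) * star (U v (e i)) = 1 := by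
        rw [← h1]
        apply Finset.sum_congr rfl
        intro v _
        rw [Matrix.star_apply]
        ring
      rw [SqAux.sum_mul_star] at h2
      exact_mod_cast h2
    · ext x y
      have hLHS : ρAB x y = ∑ j, U x j * (hH.eigenvalues j : ℂ) * star (U y j) := by
        conv_lhs => rw [hH.spectral_theorem]
        rw [Unitary.conjStarAlgAut_apply, Matrix.mul_apply]
        apply Finset.sum_congr rfl
        intro j _
        rw [Matrix.mul_diagonal]
        rfl
      rw [hLHS]
      rw [Matrix.sum_apply]
      rw [← Equiv.sum_comp e (fun j => U x j * (hH.eigenvalues j : ℂ) * star (U y j))]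
      apply Finset.sum_congr rfl
      intro i _
      simp only [Matrix.smul_apply, Matrix.vecMulVec_apply, Pi.star_apply, smul_eq_mul]
      ring
  obtain ⟨x0, hx0⟩ := hFne
  by_cases hbdd : BddBelow {x : ℝ | ∃ (dC : ℕ), 1 ≤ dC ∧
      ∃ ρ : Matrix (Fin dA × Fin dB × Fin dC) (Fin dA × Fin dB × Fin dC) ℂ,
        ρ.PosSemidef ∧ ρ.trace = 1 ∧ ptraceC3 ρ = ρAB ∧
        x = (1 / 2) * condMutualInfo ρ}
  · exact csInf_le_csInf hbdd ⟨x0, hx0⟩ hsub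
  · rw [Real.sInf_of_not_bddBelow hbdd]
    apply Real.sInf_nonneg
    rintro x ⟨n, p, ψ, hp, hps, hnorm, hdec, hx⟩
    rw [hx]
    apply Finset.sum_nonneg
    intro i _
    exact mul_nonneg (hp i) (SqAux.local_entropy_nonneg _ (hnorm i))
end

section
/- (Koashi–Winter relation) Let |Ψ⟩ be a unit vector in ℂ^{d_A} ⊗ ℂ^{d_B} ⊗ ℂ^{d_C} with ρ_ABC = |Ψ⟩⟨Ψ| and reduced states ρ_AB, ρ_AC, ρ_A. Then E_F(ρ_AB) ≤ S(ρ_A) − J(A:C), where J(A:C) is the classical correlation of ρ_AC, i.e. the supremum over projective measurements {Π_i} on C of S(ρ_A) − Σ_i p_i S(ρ_{A,i}), with p_i = Tr[(I_A ⊗ Π_i) ρ_AC] and ρ_{A,i} = Tr_C[(I_A ⊗ Π_i) ρ_AC (I_A ⊗ Π_i)]/p_i. -/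
open scoped Kronecker ComplexOrder

/-- Probability `p_i = Tr[(I_A ⊗ Π) ρ_AC]` of measurement outcome `Pj` (a projector
on `C`) in the state `ρAC`. -/
noncomputable def measProb {A C : Type*} [Fintype A] [DecidableEq A] [Fintype C] [DecidableEq C]
    (ρAC : Matrix (A × C) (A × C) ℂ) (Pj : Matrix C C ℂ) : ℝ :=
  ((((1 : Matrix A A ℂ) ⊗ₖ Pj) * ρAC).trace).re

/-- Post-measurement conditional state
`ρ_{A,i} = Tr_C[(I_A ⊗ Π) ρ_AC (I_A ⊗ Π)] / p_i` of `A` given outcome `Pj` on `C`. -/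
noncomputable def measState {A C : Type*} [Fintype A] [DecidableEq A] [Fintype C] [DecidableEq C]
    (ρAC : Matrix (A × C) (A × C) ℂ) (Pj : Matrix C C ℂ) : Matrix A A ℂ :=
  ((measProb ρAC Pj : ℂ))⁻¹ •
    ptraceB (((1 : Matrix A A ℂ) ⊗ₖ Pj) * ρAC * ((1 : Matrix A A ℂ) ⊗ₖ Pj))

namespace KW

open Matrix Complex Finset

lemma mul_star_self (z : ℂ) : z * star z = ((‖z‖ ^ 2 : ℝ) : ℂ) := by
  rw [show star z = starRingEnd ℂ z from rfl, Complex.mul_conj, Complex.normSq_eq_norm_sq]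

lemma star_mul_self' (z : ℂ) : star z * z = ((‖z‖ ^ 2 : ℝ) : ℂ) := by
  rw [mul_comm]; exact mul_star_self z

lemma vN_eq {n : Type*} [Fintype n] [DecidableEq n] {ρ : Matrix n n ℂ} (h : ρ.IsHermitian) :
    vN ρ = ∑ i, Real.negMulLog (h.eigenvalues i) := by
  rw [vN, dif_pos h]
  simp [Real.negMulLog, neg_mul, Finset.sum_neg_distrib]

lemma trace_eq {n : Type*} [Fintype n] [DecidableEq n] {ρ : Matrix n n ℂ} (h : ρ.IsHermitian) :
    ρ.trace = ((∑ i, h.eigenvalues i : ℝ) : ℂ) := by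
  conv_lhs => rw [h.spectral_theorem]
  rw [Unitary.conjStarAlgAut_apply, Matrix.trace_mul_cycle,
    Matrix.mem_unitaryGroup_iff'.mp h.eigenvectorUnitary.2, Matrix.one_mul, Matrix.trace_diagonal]
  push_cast
  rfl

lemma row_norm {n : Type*} [Fintype n] [DecidableEq n] {U : Matrix n n ℂ}
    (hU : U * star U = 1) (i : n) : ∑ j, ‖U i j‖ ^ 2 = 1 := by
  have h := congrFun (congrFun hU i) i
  rw [Matrix.mul_apply] at h
  simp only [Matrix.star_apply, Matrix.one_apply_eq] at h
  have : ∑ j, ((‖U i j‖ ^ 2 : ℝ) : ℂ) = 1 := by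
    rw [← h]; exact Finset.sum_congr rfl fun j _ => (mul_star_self _).symm
  exact_mod_cast this

lemma col_norm {n : Type*} [Fintype n] [DecidableEq n] {U : Matrix n n ℂ}
    (hU : star U * U = 1) (j : n) : ∑ i, ‖U i j‖ ^ 2 = 1 := by
  have h := congrFun (congrFun hU j) j
  rw [Matrix.mul_apply] at h
  simp only [Matrix.star_apply, Matrix.one_apply_eq] at h
  have : ∑ i, ((‖U i j‖ ^ 2 : ℝ) : ℂ) = 1 := by
    rw [← h]; exact Finset.sum_congr rfl fun i _ => (star_mul_self' _).symm
  exact_mod_cast this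

/-- Concavity of von Neumann entropy. -/
lemma vN_concave {d : Type*} [Fintype d] [DecidableEq d] {ι : Type*} [Fintype ι]
    (w : ι → ℝ) (τ : ι → Matrix d d ℂ)
    (hw : ∀ k, 0 ≤ w k) (hw1 : ∑ k, w k = 1)
    (hτ : ∀ k, (τ k).PosSemidef)
    {ρ : Matrix d d ℂ} (hρdef : ρ = ∑ k, (w k : ℂ) • τ k) :
    ∑ k, w k * vN (τ k) ≤ vN ρ := by
  classical
  have hρH : ρ.IsHermitian := by
    rw [hρdef]
    unfold Matrix.IsHermitian
    rw [Matrix.conjTranspose_sum]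
    refine Finset.sum_congr rfl fun k _ => ?_
    rw [Matrix.conjTranspose_smul, (hτ k).1]
    congr 1
    simp [Complex.star_def, Complex.conj_ofReal]
  set U : Matrix d d ℂ := (hρH.eigenvectorUnitary : Matrix d d ℂ) with hUdef
  have hUu : star U * U = 1 := Matrix.mem_unitaryGroup_iff'.mp hρH.eigenvectorUnitary.2
  have hUu' : U * star U = 1 := Matrix.mem_unitaryGroup_iff.mp hρH.eigenvectorUnitary.2
  set V : (k : ι) → Matrix d d ℂ := fun k => ((hτ k).1.eigenvectorUnitary : Matrix d d ℂ)
    with hVdef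
  have hVu : ∀ k, star (V k) * V k = 1 :=
    fun k => Matrix.mem_unitaryGroup_iff'.mp (hτ k).1.eigenvectorUnitary.2
  have hVu' : ∀ k, V k * star (V k) = 1 :=
    fun k => Matrix.mem_unitaryGroup_iff.mp (hτ k).1.eigenvectorUnitary.2
  set W : (k : ι) → Matrix d d ℂ := fun k => star U * V k with hWdef
  have hWstar : ∀ k, star (W k) = star (V k) * U := by
    intro k
    show star (star U * V k) = _
    rw [Matrix.star_mul, star_star]
  have hWu : ∀ k, star (W k) * W k = 1 := by
    intro k
    rw [hWstar]
    show star (V k) * U * (star U * V k) = 1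
    rw [mul_assoc, ← mul_assoc U, hUu', Matrix.one_mul, hVu]
  have hWu' : ∀ k, W k * star (W k) = 1 := by
    intro k
    rw [hWstar]
    show (star U * V k) * (star (V k) * U) = 1
    rw [mul_assoc, ← mul_assoc (V k), hVu', Matrix.one_mul, hUu]
  set D : (k : ι) → Matrix d d ℂ :=
    fun k => Matrix.diagonal (RCLike.ofReal ∘ (hτ k).1.eigenvalues) with hDdef
  have key : ∀ i, hρH.eigenvalues i
      = ∑ k, ∑ j, (w k * ‖W k i j‖ ^ 2) * (hτ k).1.eigenvalues j := by
    intro i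
    have h2 : ∀ k, star U * τ k * U = W k * D k * star (W k) := by
      intro k
      conv_lhs => rw [(hτ k).1.spectral_theorem]
      rw [hWstar]
      show star U * (V k * D k * star (V k)) * U = (star U * V k) * D k * (star (V k) * U)
      simp only [mul_assoc]
    have h4 : ∀ k, (W k * D k * star (W k)) i i
        = ((∑ j, ‖W k i j‖ ^ 2 * (hτ k).1.eigenvalues j : ℝ) : ℂ) := by
      intro k
      rw [Matrix.mul_apply]
      push_cast
      refine Finset.sum_congr rfl fun j _ => ?_
      rw [hDdef, Matrix.mul_diagonal]
      simp only [Matrix.star_apply, Function.comp_apply]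
      rw [mul_comm (W k i j) _, mul_assoc, mul_star_self]
      push_cast
      exact mul_comm _ _
    have h3 : ((hρH.eigenvalues i : ℝ) : ℂ)
        = ((∑ k, ∑ j, (w k * ‖W k i j‖ ^ 2) * (hτ k).1.eigenvalues j : ℝ) : ℂ) := by
      have h1 : star U * ρ * U = Matrix.diagonal (RCLike.ofReal ∘ hρH.eigenvalues) := by
        have := hρH.conjStarAlgAut_star_eigenvectorUnitary
        rw [Unitary.conjStarAlgAut_apply, Unitary.coe_star, star_star] at this
        exact this
      have hdd : (star U * ρ * U) i i = ((hρH.eigenvalues i : ℝ) : ℂ) := by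
        rw [h1]; simp [Matrix.diagonal_apply_eq]
      rw [← hdd, hρdef]
      simp only [Matrix.mul_sum, Matrix.sum_mul, Matrix.mul_smul, Matrix.smul_mul,
        Matrix.sum_apply, Matrix.smul_apply, smul_eq_mul]
      push_cast
      refine Finset.sum_congr rfl fun k _ => ?_
      rw [h2 k, h4 k]
      push_cast
      rw [Finset.mul_sum]
      refine Finset.sum_congr rfl fun j _ => by ring
    exact_mod_cast h3
  have jensen : ∀ i, ∑ k, ∑ j, (w k * ‖W k i j‖ ^ 2) * Real.negMulLog ((hτ k).1.eigenvalues j)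
      ≤ Real.negMulLog (hρH.eigenvalues i) := by
    intro i
    have hcc := Real.concaveOn_negMulLog
    have hj := hcc.le_map_sum (t := (Finset.univ : Finset (ι × d)))
      (w := fun p => w p.1 * ‖W p.1 i p.2‖ ^ 2) (p := fun p => (hτ p.1).1.eigenvalues p.2)
      (fun p _ => mul_nonneg (hw p.1) (sq_nonneg _))
      (by
        rw [Fintype.sum_prod_type, ← hw1]
        refine Finset.sum_congr rfl fun k _ => ?_
        show ∑ j : d, w k * ‖W k i j‖ ^ 2 = w k
        rw [← Finset.mul_sum, row_norm (hWu' k) i, mul_one])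
      (fun p _ => (hτ p.1).eigenvalues_nonneg p.2)
    rw [Fintype.sum_prod_type, Fintype.sum_prod_type] at hj
    simp only [smul_eq_mul] at hj
    calc ∑ k, ∑ j, (w k * ‖W k i j‖ ^ 2) * Real.negMulLog ((hτ k).1.eigenvalues j)
        ≤ Real.negMulLog (∑ k, ∑ j, (w k * ‖W k i j‖ ^ 2) * (hτ k).1.eigenvalues j) := hj
      _ = Real.negMulLog (hρH.eigenvalues i) := by rw [← key i]
  calc ∑ k, w k * vN (τ k)
      = ∑ k, ∑ j, ∑ i, (w k * ‖W k i j‖ ^ 2) * Real.negMulLog ((hτ k).1.eigenvalues j) := by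
        refine Finset.sum_congr rfl fun k _ => ?_
        rw [vN_eq (hτ k).1, Finset.mul_sum]
        refine Finset.sum_congr rfl fun j _ => ?_
        rw [← Finset.sum_mul, ← Finset.mul_sum, col_norm (hWu k) j, mul_one]
    _ = ∑ i, ∑ k, ∑ j, (w k * ‖W k i j‖ ^ 2) * Real.negMulLog ((hτ k).1.eigenvalues j) := by
        rw [show (∑ k : ι, ∑ j : d, ∑ i : d,
              (w k * ‖W k i j‖ ^ 2) * Real.negMulLog ((hτ k).1.eigenvalues j))
            = ∑ k : ι, ∑ i : d, ∑ j : d,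
              (w k * ‖W k i j‖ ^ 2) * Real.negMulLog ((hτ k).1.eigenvalues j) from
          Finset.sum_congr rfl fun k _ => Finset.sum_comm]
        exact Finset.sum_comm
    _ ≤ ∑ i, Real.negMulLog (hρH.eigenvalues i) := Finset.sum_le_sum fun i _ => jensen i
    _ = vN ρ := (vN_eq hρH).symm

lemma sum_mul_star_eq {C : Type*} [Fintype C] (u v : C → ℂ) :
    ∑ c, u c * star (v c) = star v ⬝ᵥ u := by
  simp [dotProduct, mul_comm]

lemma proj_dot {C : Type*} [Fintype C] [DecidableEq C] {P : Matrix C C ℂ}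
    (hP : Pᴴ * P = P) (f g : C → ℂ) :
    star (P *ᵥ g) ⬝ᵥ (P *ᵥ f) = star g ⬝ᵥ (P *ᵥ f) := by
  rw [Matrix.dotProduct_mulVec, Matrix.star_mulVec, Matrix.vecMul_vecMul, hP,
    ← Matrix.dotProduct_mulVec]

lemma sum_mulVec {ι n m : Type*} [Fintype ι] [Fintype n] (M : ι → Matrix m n ℂ) (v : n → ℂ) :
    (∑ i, M i) *ᵥ v = ∑ i, M i *ᵥ v := by
  ext j
  simp only [Matrix.mulVec, dotProduct, Matrix.sum_apply, Finset.sum_apply,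
    Finset.sum_mul]
  exact Finset.sum_comm

lemma dot_sum {ι n : Type*} [Fintype ι] [Fintype n] (g : n → ℂ) (f : ι → n → ℂ) :
    g ⬝ᵥ (∑ i, f i) = ∑ i, g ⬝ᵥ f i := by
  simp only [dotProduct, Finset.sum_apply, Finset.mul_sum]
  exact Finset.sum_comm

lemma kron_one_mul_apply {A C n' : Type*} [Fintype A] [DecidableEq A] [Fintype C]
    [DecidableEq C] (P : Matrix C C ℂ) (M : Matrix (A × C) n' ℂ) (a : A) (c : C) (y : n') :
    (((1 : Matrix A A ℂ) ⊗ₖ P) * M) (a, c) y = ∑ c1, P c c1 * M (a, c1) y := by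
  rw [Matrix.mul_apply, Fintype.sum_prod_type]
  rw [Finset.sum_eq_single a]
  · simp [Matrix.one_apply]
  · intro a1 _ hne
    simp [Matrix.one_apply, Ne.symm hne]
  · simp

lemma mul_kron_one_apply {A C n' : Type*} [Fintype A] [DecidableEq A] [Fintype C]
    [DecidableEq C] (P : Matrix C C ℂ) (M : Matrix n' (A × C) ℂ) (x : n') (a : A) (c : C) :
    (M * ((1 : Matrix A A ℂ) ⊗ₖ P)) x (a, c) = ∑ c2, M x (a, c2) * P c2 c := by
  rw [Matrix.mul_apply, Fintype.sum_prod_type]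
  rw [Finset.sum_eq_single a]
  · simp [Matrix.one_apply]
  · intro a1 _ hne
    simp [Matrix.one_apply, hne]
  · simp

lemma ptraceB_pure_psd {A B : Type*} [Fintype A] [DecidableEq A] [Fintype B] [DecidableEq B]
    (ψ : A × B → ℂ) : (ptraceB (Matrix.vecMulVec ψ (star ψ))).PosSemidef := by
  have h : ptraceB (Matrix.vecMulVec ψ (star ψ))
      = (Matrix.of fun (a : A) (b : B) => ψ (a, b)) *
        (Matrix.of fun (a : A) (b : B) => ψ (a, b))ᴴ := by
    ext a a'
    rw [Matrix.mul_apply]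
    rfl
  rw [h]
  exact Matrix.posSemidef_self_mul_conjTranspose _

lemma ptraceB_pure_trace {A B : Type*} [Fintype A] [DecidableEq A] [Fintype B] [DecidableEq B]
    (ψ : A × B → ℂ) :
    (ptraceB (Matrix.vecMulVec ψ (star ψ))).trace = ((∑ v, ‖ψ v‖ ^ 2 : ℝ) : ℂ) := by
  have h1 : (ptraceB (Matrix.vecMulVec ψ (star ψ))).trace
      = ∑ a, ∑ b, ψ (a, b) * star (ψ (a, b)) := rfl
  rw [h1]
  push_cast
  rw [Fintype.sum_prod_type]
  exact Finset.sum_congr rfl fun a _ => Finset.sum_congr rfl fun b _ => by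
    rw [mul_star_self]; push_cast; ring

lemma vN_nonneg {d : Type*} [Fintype d] [DecidableEq d] {M : Matrix d d ℂ}
    (h : M.PosSemidef) (htr : M.trace = 1) : 0 ≤ vN M := by
  rw [vN_eq h.1]
  have hsum : ∑ i, h.1.eigenvalues i = 1 := by
    have h2 := trace_eq h.1
    rw [htr] at h2
    exact_mod_cast h2.symm
  refine Finset.sum_nonneg fun i _ => Real.negMulLog_nonneg (h.eigenvalues_nonneg i) ?_
  calc h.1.eigenvalues i ≤ ∑ j, h.1.eigenvalues j :=
        Finset.single_le_sum (fun j _ => h.eigenvalues_nonneg j) (Finset.mem_univ i)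
    _ = 1 := hsum

lemma EoF_le {A B : Type*} [Fintype A] [DecidableEq A] [Fintype B] [DecidableEq B]
    (ρAB : Matrix (A × B) (A × B) ℂ) {n : ℕ} (p : Fin n → ℝ) (ψ : Fin n → (A × B → ℂ))
    (h1 : ∀ i, 0 ≤ p i) (h2 : ∑ i, p i = 1) (h3 : ∀ i, ∑ v, ‖ψ i v‖ ^ 2 = 1)
    (h4 : ρAB = ∑ i, (p i : ℂ) • Matrix.vecMulVec (ψ i) (star (ψ i))) :
    EoF ρAB ≤ ∑ i, p i * vN (ptraceB (Matrix.vecMulVec (ψ i) (star (ψ i)))) := by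
  apply csInf_le
  · refine ⟨0, fun x hx => ?_⟩
    obtain ⟨n', p', ψ', hp', _, hnorm', _, hx'⟩ := hx
    rw [hx']
    refine Finset.sum_nonneg fun i _ => mul_nonneg (hp' i) ?_
    refine vN_nonneg (ptraceB_pure_psd (ψ' i)) ?_
    rw [ptraceB_pure_trace (ψ' i), hnorm' i]
    norm_num
  · exact ⟨n, p, ψ, h1, h2, h3, h4, rfl⟩

end KW
namespace KW
open Matrix Complex Finset

set_option maxHeartbeats 1000000 in
lemma EoF_le_meas {dA dB dC m : ℕ}
    (Ψ : Fin dA × Fin dB × Fin dC → ℂ) (hΨ : ∑ v, ‖Ψ v‖ ^ 2 = 1)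
    (Pj : Fin m → Matrix (Fin dC) (Fin dC) ℂ)
    (hherm : ∀ i, (Pj i).IsHermitian) (hidem : ∀ i, Pj i * Pj i = Pj i)
    (hsum : ∑ i, Pj i = 1) :
    EoF (ptraceC3 (Matrix.vecMulVec Ψ (star Ψ))) ≤
      ∑ i, measProb (ptraceB3 (Matrix.vecMulVec Ψ (star Ψ))) (Pj i)
        * vN (measState (ptraceB3 (Matrix.vecMulVec Ψ (star Ψ))) (Pj i)) := by
  classical
  have hPP : ∀ i, (Pj i)ᴴ * Pj i = Pj i := fun i => by rw [(hherm i).eq, hidem i]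
  set ψab : Fin dA → Fin dB → (Fin dC → ℂ) := fun a b c => Ψ (a, b, c) with hψab
  set ρAB := ptraceC3 (Matrix.vecMulVec Ψ (star Ψ)) with hρABdef
  set ρAC := ptraceB3 (Matrix.vecMulVec Ψ (star Ψ)) with hρACdef
  set Np : Fin m → Matrix (Fin dA × Fin dB) (Fin dC) ℂ :=
    fun i => Matrix.of fun x c => (Pj i *ᵥ ψab x.1 x.2) c with hNp
  set T : Fin m → Matrix (Fin dA × Fin dB) (Fin dA × Fin dB) ℂ :=
    fun i => Np i * (Np i)ᴴ with hTdef
  have hTpsd : ∀ i, (T i).PosSemidef := fun i => Matrix.posSemidef_self_mul_conjTranspose (Np i)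
  have hTapp : ∀ i (x y : Fin dA × Fin dB),
      T i x y = star (ψab y.1 y.2) ⬝ᵥ (Pj i *ᵥ ψab x.1 x.2) := by
    intro i x y
    show (Np i * (Np i)ᴴ) x y = _
    rw [Matrix.mul_apply]
    calc ∑ c, Np i x c * (Np i)ᴴ c y
        = ∑ c, (Pj i *ᵥ ψab x.1 x.2) c * star ((Pj i *ᵥ ψab y.1 y.2) c) := rfl
      _ = star (Pj i *ᵥ ψab y.1 y.2) ⬝ᵥ (Pj i *ᵥ ψab x.1 x.2) := sum_mul_star_eq _ _
      _ = star (ψab y.1 y.2) ⬝ᵥ (Pj i *ᵥ ψab x.1 x.2) := proj_dot (hPP i) _ _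
  have hρABapp : ∀ (x y : Fin dA × Fin dB), ρAB x y = star (ψab y.1 y.2) ⬝ᵥ ψab x.1 x.2 := by
    intro x y
    show (∑ c, Ψ (x.1, x.2, c) * star Ψ (y.1, y.2, c)) = _
    exact sum_mul_star_eq (ψab x.1 x.2) (ψab y.1 y.2)
  have hρACapp : ∀ (a a' : Fin dA) (c c' : Fin dC),
      ρAC (a, c) (a', c') = ∑ b, ψab a b c * star (ψab a' b c') := fun a a' c c' => rfl
  -- sum of the subnormalized post-measurement states recovers ρAB
  have hsumT : ∑ i, T i = ρAB := by
    ext x y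
    rw [Matrix.sum_apply]
    calc ∑ i, T i x y
        = ∑ i, star (ψab y.1 y.2) ⬝ᵥ (Pj i *ᵥ ψab x.1 x.2) :=
          Finset.sum_congr rfl fun i _ => hTapp i x y
      _ = star (ψab y.1 y.2) ⬝ᵥ ((∑ i, Pj i) *ᵥ ψab x.1 x.2) := by
          rw [sum_mulVec, dot_sum]
      _ = star (ψab y.1 y.2) ⬝ᵥ ψab x.1 x.2 := by rw [hsum, Matrix.one_mulVec]
      _ = ρAB x y := (hρABapp x y).symm
  -- trace identity: measurement probability equals trace of T i
  have hTrT : ∀ i, (((1 : Matrix (Fin dA) (Fin dA) ℂ) ⊗ₖ Pj i) * ρAC).trace = (T i).trace := by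
    intro i
    have tr1 : (((1 : Matrix (Fin dA) (Fin dA) ℂ) ⊗ₖ Pj i) * ρAC).trace
        = ∑ a, ∑ c, (((1 : Matrix (Fin dA) (Fin dA) ℂ) ⊗ₖ Pj i) * ρAC) (a, c) (a, c) := by
      rw [Matrix.trace, Fintype.sum_prod_type]
      rfl
    have tr2 : (T i).trace = ∑ a, ∑ b, T i (a, b) (a, b) := by
      rw [Matrix.trace, Fintype.sum_prod_type]
      rfl
    rw [tr1, tr2]
    refine Finset.sum_congr rfl fun a _ => ?_
    calc ∑ c, (((1 : Matrix (Fin dA) (Fin dA) ℂ) ⊗ₖ Pj i) * ρAC) (a, c) (a, c)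
        = ∑ c, ∑ c1, Pj i c c1 * ρAC (a, c1) (a, c) :=
          Finset.sum_congr rfl fun c _ => kron_one_mul_apply _ _ _ _ _
      _ = ∑ c, ∑ c1, ∑ b, Pj i c c1 * (ψab a b c1 * star (ψab a b c)) := by
          refine Finset.sum_congr rfl fun c _ => Finset.sum_congr rfl fun c1 _ => ?_
          rw [hρACapp, Finset.mul_sum]
      _ = ∑ b, ∑ c, ∑ c1, Pj i c c1 * (ψab a b c1 * star (ψab a b c)) := by
          rw [show (∑ c, ∑ c1, ∑ b, Pj i c c1 * (ψab a b c1 * star (ψab a b c)))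
              = ∑ c, ∑ b, ∑ c1, Pj i c c1 * (ψab a b c1 * star (ψab a b c)) from
            Finset.sum_congr rfl fun c _ => Finset.sum_comm]
          exact Finset.sum_comm
      _ = ∑ b, ∑ c, (Pj i *ᵥ ψab a b) c * star (ψab a b c) := by
          refine Finset.sum_congr rfl fun b _ => Finset.sum_congr rfl fun c _ => ?_
          show _ = (∑ c1, Pj i c c1 * ψab a b c1) * star (ψab a b c)
          rw [Finset.sum_mul]
          try exact Finset.sum_congr rfl fun c1 _ => by ring
      _ = ∑ b, T i (a, b) (a, b) := by
          refine Finset.sum_congr rfl fun b _ => ?_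
          rw [sum_mul_star_eq, hTapp i (a, b) (a, b)]
  -- partial trace identity for the post-measurement state
  have hPtr : ∀ i, ptraceB (((1 : Matrix (Fin dA) (Fin dA) ℂ) ⊗ₖ Pj i) * ρAC *
      ((1 : Matrix (Fin dA) (Fin dA) ℂ) ⊗ₖ Pj i)) = ptraceB (T i) := by
    intro i
    ext a a'
    show (∑ c, (((1 : Matrix (Fin dA) (Fin dA) ℂ) ⊗ₖ Pj i) * ρAC *
        ((1 : Matrix (Fin dA) (Fin dA) ℂ) ⊗ₖ Pj i)) (a, c) (a', c)) = ∑ b, T i (a, b) (a', b)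
    calc ∑ c, (((1 : Matrix (Fin dA) (Fin dA) ℂ) ⊗ₖ Pj i) * ρAC *
          ((1 : Matrix (Fin dA) (Fin dA) ℂ) ⊗ₖ Pj i)) (a, c) (a', c)
        = ∑ c, ∑ c2, (((1 : Matrix (Fin dA) (Fin dA) ℂ) ⊗ₖ Pj i) * ρAC) (a, c) (a', c2)
            * Pj i c2 c :=
          Finset.sum_congr rfl fun c _ => mul_kron_one_apply _ _ _ _ _
      _ = ∑ c, ∑ c2, (∑ c1, Pj i c c1 * ρAC (a, c1) (a', c2)) * Pj i c2 c := by
          refine Finset.sum_congr rfl fun c _ => Finset.sum_congr rfl fun c2 _ => ?_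
          rw [kron_one_mul_apply]
      _ = ∑ c, ∑ c2, ∑ c1, ∑ b,
            Pj i c c1 * (ψab a b c1 * star (ψab a' b c2)) * Pj i c2 c := by
          refine Finset.sum_congr rfl fun c _ => Finset.sum_congr rfl fun c2 _ => ?_
          rw [Finset.sum_mul]
          refine Finset.sum_congr rfl fun c1 _ => ?_
          rw [hρACapp, Finset.mul_sum, Finset.sum_mul]
      _ = ∑ b, ∑ c, ∑ c2, ∑ c1,
            Pj i c c1 * (ψab a b c1 * star (ψab a' b c2)) * Pj i c2 c := by
          rw [show (∑ c, ∑ c2, ∑ c1, ∑ b,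
                Pj i c c1 * (ψab a b c1 * star (ψab a' b c2)) * Pj i c2 c)
              = ∑ c, ∑ c2, ∑ b, ∑ c1,
                Pj i c c1 * (ψab a b c1 * star (ψab a' b c2)) * Pj i c2 c from
            Finset.sum_congr rfl fun c _ => Finset.sum_congr rfl fun c2 _ => Finset.sum_comm]
          rw [show (∑ c, ∑ c2, ∑ b, ∑ c1,
                Pj i c c1 * (ψab a b c1 * star (ψab a' b c2)) * Pj i c2 c)
              = ∑ c, ∑ b, ∑ c2, ∑ c1,
                Pj i c c1 * (ψab a b c1 * star (ψab a' b c2)) * Pj i c2 c from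
            Finset.sum_congr rfl fun c _ => Finset.sum_comm]
          exact Finset.sum_comm
      _ = ∑ b, ∑ c, (Pj i *ᵥ ψab a b) c * star ((Pj i *ᵥ ψab a' b) c) := by
          refine Finset.sum_congr rfl fun b _ => Finset.sum_congr rfl fun c _ => ?_
          have hstar : star ((Pj i *ᵥ ψab a' b) c) = ∑ c2, star (ψab a' b c2) * Pj i c2 c := by
            show star (∑ c2, Pj i c c2 * ψab a' b c2) = _
            rw [star_sum]
            refine Finset.sum_congr rfl fun c2 _ => ?_
            rw [star_mul']
            rw [show star (Pj i c c2) = Pj i c2 c from by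
              conv_rhs => rw [← (hherm i).eq]
              rfl]
            ring
          rw [hstar]
          show (∑ c2, ∑ c1, Pj i c c1 * (ψab a b c1 * star (ψab a' b c2)) * Pj i c2 c)
              = (∑ c1, Pj i c c1 * ψab a b c1) * ∑ c2, star (ψab a' b c2) * Pj i c2 c
          rw [Finset.sum_mul_sum]
          rw [Finset.sum_comm]
          refine Finset.sum_congr rfl fun c1 _ => Finset.sum_congr rfl fun c2 _ => by ring
      _ = ∑ b, T i (a, b) (a', b) := by
          refine Finset.sum_congr rfl fun b _ => ?_
          rw [sum_mul_star_eq, hTapp i (a, b) (a', b)]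
          exact proj_dot (hPP i) _ _
  -- spectral decomposition of each T i
  set lam : (i : Fin m) → (Fin dA × Fin dB) → ℝ := fun i => (hTpsd i).1.eigenvalues with hlam
  have hlamnn : ∀ i k, 0 ≤ lam i k := fun i k => (hTpsd i).eigenvalues_nonneg k
  set Uev : (i : Fin m) → Matrix (Fin dA × Fin dB) (Fin dA × Fin dB) ℂ :=
    fun i => ((hTpsd i).1.eigenvectorUnitary : Matrix _ _ ℂ) with hUev
  have hUcol : ∀ i k, ∑ x, ‖Uev i x k‖ ^ 2 = 1 := fun i k =>
    col_norm (Matrix.mem_unitaryGroup_iff'.mp (hTpsd i).1.eigenvectorUnitary.2) k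
  set φ : (i : Fin m) → (Fin dA × Fin dB) → (Fin dA × Fin dB → ℂ) :=
    fun i k x => Uev i x k with hφ
  have hrank1 : ∀ i, T i = ∑ k, ((lam i k : ℝ) : ℂ) •
      Matrix.vecMulVec (φ i k) (star (φ i k)) := by
    intro i
    conv_lhs => rw [(hTpsd i).1.spectral_theorem, Unitary.conjStarAlgAut_apply]
    ext x y
    rw [Matrix.sum_apply, Matrix.mul_apply]
    refine Finset.sum_congr rfl fun k _ => ?_
    rw [Matrix.mul_diagonal]
    show Uev i x k * RCLike.ofReal (lam i k) * star (Uev i y k)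
        = ((lam i k : ℝ) : ℂ) • (Uev i x k * star (Uev i y k))
    rw [show (RCLike.ofReal (lam i k) : ℂ) = ((lam i k : ℝ) : ℂ) from rfl]
    rw [smul_eq_mul]
    ring
  have hUnorm : ∀ i k, ∑ v, ‖φ i k v‖ ^ 2 = 1 := fun i k => hUcol i k
  -- τ's: local states of the pure components
  set τ : (i : Fin m) → (Fin dA × Fin dB) → Matrix (Fin dA) (Fin dA) ℂ :=
    fun i k => ptraceB (Matrix.vecMulVec (φ i k) (star (φ i k))) with hτdef
  have hptrB_T : ∀ i, ptraceB (T i) = ∑ k, ((lam i k : ℝ) : ℂ) • τ i k := by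
    intro i
    rw [hrank1 i]
    ext a a'
    show (∑ b, (∑ k, ((lam i k : ℝ) : ℂ) • Matrix.vecMulVec (φ i k) (star (φ i k)))
        (a, b) (a', b)) = _
    simp only [Matrix.sum_apply, Matrix.smul_apply, smul_eq_mul, hτdef, ptraceB,
      Matrix.of_apply, Finset.mul_sum]
    exact Finset.sum_comm
  have hTr1 : ∀ i, (T i).trace = ((∑ k, lam i k : ℝ) : ℂ) := fun i => trace_eq (hTpsd i).1
  have hp : ∀ i, measProb ρAC (Pj i) = ∑ k, lam i k := by
    intro i
    show ((((1 : Matrix (Fin dA) (Fin dA) ℂ) ⊗ₖ Pj i) * ρAC).trace).re = _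
    rw [hTrT i, hTr1 i, Complex.ofReal_re]
  have hms : ∀ i, measState ρAC (Pj i) = ((measProb ρAC (Pj i) : ℝ) : ℂ)⁻¹ •
      ptraceB (T i) := by
    intro i
    show ((measProb ρAC (Pj i) : ℝ) : ℂ)⁻¹ • ptraceB _ = _
    rw [hPtr i]
  -- trace of ρAB is 1
  have hρABtr : ρAB.trace = 1 := by
    have h1 : ρAB.trace
        = ∑ x : Fin dA × Fin dB, ∑ c, Ψ (x.1, x.2, c) * star (Ψ (x.1, x.2, c)) := rfl
    rw [h1]
    have h2 : ∑ x : Fin dA × Fin dB, ∑ c, Ψ (x.1, x.2, c) * star (Ψ (x.1, x.2, c))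
        = ((∑ x : Fin dA × Fin dB, ∑ c, ‖Ψ (x.1, x.2, c)‖ ^ 2 : ℝ) : ℂ) := by
      push_cast
      refine Finset.sum_congr rfl fun x _ => Finset.sum_congr rfl fun c _ => ?_
      rw [mul_star_self]
      push_cast
      ring
    rw [h2]
    norm_cast
    rw [← hΨ]
    calc ∑ x : Fin dA × Fin dB, ∑ c, ‖Ψ (x.1, x.2, c)‖ ^ 2
        = ∑ a, ∑ b, ∑ c, ‖Ψ (a, b, c)‖ ^ 2 :=
          Fintype.sum_prod_type (fun x => ∑ c, ‖Ψ (x.1, x.2, c)‖ ^ 2)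
      _ = ∑ a, ∑ y : Fin dB × Fin dC, ‖Ψ (a, y)‖ ^ 2 := Finset.sum_congr rfl fun a _ =>
          (Fintype.sum_prod_type (fun y => ‖Ψ (a, y)‖ ^ 2)).symm
      _ = ∑ v : Fin dA × Fin dB × Fin dC, ‖Ψ v‖ ^ 2 :=
          (Fintype.sum_prod_type (fun v => ‖Ψ v‖ ^ 2)).symm
  have hlamsum : ∑ i, ∑ k, lam i k = 1 := by
    have h1 : ∑ i, (T i).trace = 1 := by rw [← Matrix.trace_sum, hsumT, hρABtr]
    have h2 : ((∑ i, ∑ k, lam i k : ℝ) : ℂ) = 1 := by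
      push_cast
      rw [← h1]
      refine Finset.sum_congr rfl fun i _ => ?_
      rw [hTr1 i]
      push_cast
      rfl
    exact_mod_cast h2
  -- build the ensemble over a Fin type
  set κ : ℕ := Fintype.card (Fin m × (Fin dA × Fin dB)) with hκ
  set e : Fin κ ≃ (Fin m × (Fin dA × Fin dB)) := (Fintype.equivFin _).symm with he
  set pp : Fin κ → ℝ := fun j => lam (e j).1 (e j).2 with hpp
  set ψe : Fin κ → (Fin dA × Fin dB → ℂ) := fun j => φ (e j).1 (e j).2 with hψe
  have step1 : EoF ρAB ≤ ∑ j, pp j * vN (ptraceB (Matrix.vecMulVec (ψe j) (star (ψe j)))) := by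
    refine EoF_le ρAB pp ψe (fun j => hlamnn _ _) ?_ (fun j => hUnorm _ _) ?_
    · rw [show (∑ j, pp j) = ∑ q : Fin m × (Fin dA × Fin dB), lam q.1 q.2 from
        Equiv.sum_comp e (fun q => lam q.1 q.2)]
      rw [Fintype.sum_prod_type]
      exact hlamsum
    · rw [show (∑ j, (pp j : ℂ) • Matrix.vecMulVec (ψe j) (star (ψe j)))
          = ∑ q : Fin m × (Fin dA × Fin dB),
            ((lam q.1 q.2 : ℝ) : ℂ) • Matrix.vecMulVec (φ q.1 q.2) (star (φ q.1 q.2)) from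
        Equiv.sum_comp e
          (fun q => ((lam q.1 q.2 : ℝ) : ℂ) • Matrix.vecMulVec (φ q.1 q.2) (star (φ q.1 q.2)))]
      rw [Fintype.sum_prod_type]
      rw [show (∑ i, ∑ k, ((lam i k : ℝ) : ℂ) • Matrix.vecMulVec (φ i k) (star (φ i k)))
          = ∑ i, T i from Finset.sum_congr rfl fun i _ => (hrank1 i).symm]
      exact hsumT.symm
  have step2 : ∑ j, pp j * vN (ptraceB (Matrix.vecMulVec (ψe j) (star (ψe j))))
      = ∑ i, ∑ k, lam i k * vN (τ i k) := by
    rw [show (∑ j, pp j * vN (ptraceB (Matrix.vecMulVec (ψe j) (star (ψe j)))))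
        = ∑ q : Fin m × (Fin dA × Fin dB), lam q.1 q.2 * vN (τ q.1 q.2) from
      Equiv.sum_comp e (fun q => lam q.1 q.2 * vN (τ q.1 q.2))]
    exact Fintype.sum_prod_type (fun q => lam q.1 q.2 * vN (τ q.1 q.2))
  -- per-outcome concavity bound
  have step3 : ∀ i, ∑ k, lam i k * vN (τ i k)
      ≤ measProb ρAC (Pj i) * vN (measState ρAC (Pj i)) := by
    intro i
    have hq0 : 0 ≤ measProb ρAC (Pj i) := by
      rw [hp i]; exact Finset.sum_nonneg fun k _ => hlamnn i k
    rcases eq_or_lt_of_le hq0 with hq | hq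
    · -- zero-probability outcome: all eigenvalues vanish
      have hz : ∀ k ∈ (Finset.univ : Finset (Fin dA × Fin dB)), lam i k = 0 :=
        (Finset.sum_eq_zero_iff_of_nonneg (fun k _ => hlamnn i k)).mp (by rw [← hp i, ← hq])
      have hL : ∑ k, lam i k * vN (τ i k) = 0 :=
        Finset.sum_eq_zero fun k hk => by rw [hz k hk, zero_mul]
      rw [hL, ← hq, zero_mul]
    · set q : ℝ := measProb ρAC (Pj i) with hqdef
      have hqne : q ≠ 0 := ne_of_gt hq
      have hmsdef : measState ρAC (Pj i) = ∑ k, ((lam i k / q : ℝ) : ℂ) • τ i k := by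
        rw [hms i, hptrB_T i, Finset.smul_sum]
        refine Finset.sum_congr rfl fun k _ => ?_
        rw [smul_smul]
        congr 1
        rw [← hqdef]
        push_cast
        field_simp
      have hcon := vN_concave (fun k => lam i k / q) (fun k => τ i k)
        (fun k => div_nonneg (hlamnn i k) (le_of_lt hq))
        (by rw [← Finset.sum_div, ← hp i, ← hqdef, div_self hqne])
        (fun k => ptraceB_pure_psd _) hmsdef
      calc ∑ k, lam i k * vN (τ i k) = q * ∑ k, (lam i k / q) * vN (τ i k) := by
            rw [Finset.mul_sum]
            refine Finset.sum_congr rfl fun k _ => ?_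
            field_simp
          _ ≤ q * vN (measState ρAC (Pj i)) :=
            mul_le_mul_of_nonneg_left hcon (le_of_lt hq)
          _ = measProb ρAC (Pj i) * vN (measState ρAC (Pj i)) := rfl
  calc EoF ρAB ≤ ∑ i, ∑ k, lam i k * vN (τ i k) := step2 ▸ step1
    _ ≤ ∑ i, measProb ρAC (Pj i) * vN (measState ρAC (Pj i)) :=
      Finset.sum_le_sum fun i _ => step3 i

end KW
namespace KW
open Matrix Complex Finset

lemma ptraceB_ptraceB3 {A B C : Type*} [Fintype A] [Fintype B] [Fintype C]
    (ρ : Matrix (A × B × C) (A × B × C) ℂ) : ptraceB (ptraceB3 ρ) = ptraceB ρ := by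
  ext a a'
  show (∑ c, ∑ b, ρ (a, b, c) (a', b, c)) = ∑ y : B × C, ρ (a, y) (a', y)
  rw [Fintype.sum_prod_type (fun y : B × C => ρ (a, y) (a', y))]
  exact Finset.sum_comm

lemma trace_ptraceB3 {A B C : Type*} [Fintype A] [Fintype B] [Fintype C]
    (Ψ : A × B × C → ℂ) :
    (ptraceB3 (Matrix.vecMulVec Ψ (star Ψ))).trace = ((∑ v, ‖Ψ v‖ ^ 2 : ℝ) : ℂ) := by
  have h1 : (ptraceB3 (Matrix.vecMulVec Ψ (star Ψ))).trace
      = ∑ x : A × C, ∑ b, Ψ (x.1, b, x.2) * star (Ψ (x.1, b, x.2)) := rfl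
  rw [h1]
  have h2 : ∑ x : A × C, ∑ b, Ψ (x.1, b, x.2) * star (Ψ (x.1, b, x.2))
      = ((∑ x : A × C, ∑ b, ‖Ψ (x.1, b, x.2)‖ ^ 2 : ℝ) : ℂ) := by
    push_cast
    refine Finset.sum_congr rfl fun x _ => Finset.sum_congr rfl fun b _ => ?_
    rw [mul_star_self]
    push_cast
    ring
  rw [h2]
  norm_cast
  calc ∑ x : A × C, ∑ b, ‖Ψ (x.1, b, x.2)‖ ^ 2
      = ∑ a, ∑ c, ∑ b, ‖Ψ (a, b, c)‖ ^ 2 :=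
        Fintype.sum_prod_type (fun x : A × C => ∑ b, ‖Ψ (x.1, b, x.2)‖ ^ 2)
    _ = ∑ a, ∑ b, ∑ c, ‖Ψ (a, b, c)‖ ^ 2 := Finset.sum_congr rfl fun a _ => Finset.sum_comm
    _ = ∑ a, ∑ y : B × C, ‖Ψ (a, y)‖ ^ 2 := Finset.sum_congr rfl fun a _ =>
        (Fintype.sum_prod_type (fun y : B × C => ‖Ψ (a, y)‖ ^ 2)).symm
    _ = ∑ v : A × B × C, ‖Ψ v‖ ^ 2 := (Fintype.sum_prod_type (fun v => ‖Ψ v‖ ^ 2)).symm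

end KW

/-- Koashi–Winter relation: for a tripartite pure state
`ρ_ABC = |Ψ⟩⟨Ψ|`, `E_F(ρ_AB) ≤ S(ρ_A) − J(A:C)`, where `J(A:C)` is the classical
correlation of `ρ_AC`, i.e. the supremum over projective measurements `{Π_i}` on `C`
of `S(ρ_A) − ∑ᵢ pᵢ S(ρ_{A,i})`. -/
theorem koashi_winter
    (dA dB dC : ℕ)
    (Ψ : Fin dA × Fin dB × Fin dC → ℂ) (hΨ : ∑ v, ‖Ψ v‖ ^ 2 = 1)
    (ρABC : Matrix (Fin dA × Fin dB × Fin dC) (Fin dA × Fin dB × Fin dC) ℂ)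
    (hρ : ρABC = Matrix.vecMulVec Ψ (star Ψ))
    (J : ℝ)
    (hJ : J = sSup { x : ℝ | ∃ (m : ℕ) (Pj : Fin m → Matrix (Fin dC) (Fin dC) ℂ),
        (∀ i, (Pj i).IsHermitian) ∧ (∀ i, Pj i * Pj i = Pj i) ∧ (∑ i, Pj i = 1) ∧
        x = vN (ptraceB ρABC)
          - ∑ i, measProb (ptraceB3 ρABC) (Pj i) * vN (measState (ptraceB3 ρABC) (Pj i)) }) :
    EoF (ptraceC3 ρABC) ≤ vN (ptraceB ρABC) - J := by
  subst hρ
  rw [hJ, le_sub_comm]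
  have hEoFtop : EoF (ptraceC3 (Matrix.vecMulVec Ψ (star Ψ)))
      ≤ vN (ptraceB (Matrix.vecMulVec Ψ (star Ψ))) := by
    have h1 := KW.EoF_le_meas Ψ hΨ (fun _ : Fin 1 => (1 : Matrix (Fin dC) (Fin dC) ℂ))
      (fun _ => Matrix.isHermitian_one) (fun _ => one_mul 1) (by simp)
    have hpr : measProb (ptraceB3 (Matrix.vecMulVec Ψ (star Ψ)))
        (1 : Matrix (Fin dC) (Fin dC) ℂ) = 1 := by
      show ((((1 : Matrix (Fin dA) (Fin dA) ℂ) ⊗ₖ (1 : Matrix (Fin dC) (Fin dC) ℂ)) *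
        ptraceB3 (Matrix.vecMulVec Ψ (star Ψ))).trace).re = 1
      rw [Matrix.one_kronecker_one, Matrix.one_mul, KW.trace_ptraceB3 Ψ, hΨ]
      norm_num
    have hst : measState (ptraceB3 (Matrix.vecMulVec Ψ (star Ψ)))
        (1 : Matrix (Fin dC) (Fin dC) ℂ)
        = ptraceB (Matrix.vecMulVec Ψ (star Ψ)) := by
      show ((measProb (ptraceB3 (Matrix.vecMulVec Ψ (star Ψ)))
          (1 : Matrix (Fin dC) (Fin dC) ℂ) : ℝ) : ℂ)⁻¹ •
        ptraceB (((1 : Matrix (Fin dA) (Fin dA) ℂ) ⊗ₖ (1 : Matrix (Fin dC) (Fin dC) ℂ)) *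
          ptraceB3 (Matrix.vecMulVec Ψ (star Ψ)) *
          ((1 : Matrix (Fin dA) (Fin dA) ℂ) ⊗ₖ (1 : Matrix (Fin dC) (Fin dC) ℂ))) = _
      rw [hpr, Matrix.one_kronecker_one, Matrix.one_mul, Matrix.mul_one]
      rw [KW.ptraceB_ptraceB3]
      norm_num
    rw [Fin.sum_univ_one, hpr, hst, one_mul] at h1
    exact h1
  apply Real.sSup_le
  · rintro x ⟨m, Pj, hherm, hidem, hsum, rfl⟩
    have h := KW.EoF_le_meas Ψ hΨ Pj hherm hidem hsum
    linarith
  · linarith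
end

section
/- (Theorem 3) Let |Ψ⟩ be a unit vector in ℂ^{d_A} ⊗ ℂ^{d_B} ⊗ ℂ^{d_C} with ρ_ABC = |Ψ⟩⟨Ψ|, and let ρ_AB and ρ_AC be the reduced states. Then for every projective measurement {Π_i} on ℂ^{d_C}, the entanglement of formation satisfies E_F(ρ_AB) ≤ Σ_i p_i S(ρ_{A,i}), where p_i = Tr[(I_A ⊗ Π_i) ρ_AC] and ρ_{A,i} = Tr_C[(I_A ⊗ Π_i) ρ_AC (I_A ⊗ Π_i)]/p_i are the post-measurement probabilities and conditional states of A (the sum taken over outcomes with p_i > 0). -/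
open scoped Kronecker ComplexOrder

/-! ### Auxiliary lemmas -/

lemma vN_eq {n : Type*} [Fintype n] [DecidableEq n] {ρ : Matrix n n ℂ} (h : ρ.IsHermitian) :
    vN ρ = ∑ i, Real.negMulLog (h.eigenvalues i) := by
  rw [vN, dif_pos h]
  simp [Real.negMulLog, Finset.sum_neg_distrib]

lemma jensen_negMulLog {n : Type*} [Fintype n] (w x : n → ℝ) (hw : ∀ i, 0 ≤ w i)
    (hw1 : ∑ i, w i = 1) (hx : ∀ i, 0 ≤ x i) :
    ∑ i, w i * Real.negMulLog (x i) ≤ Real.negMulLog (∑ i, w i * x i) := by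
  have := Real.concaveOn_negMulLog.le_map_sum (t := Finset.univ) (w := w) (p := x)
    (fun i _ => hw i) hw1 (fun i _ => hx i)
  simpa [smul_eq_mul] using this

lemma unitary_col_sum {n : Type*} [Fintype n] [DecidableEq n] {U : Matrix n n ℂ}
    (hU : U ∈ Matrix.unitaryGroup n ℂ) (j : n) : ∑ k, Complex.normSq (U k j) = 1 := by
  have h1 : (star U * U) j j = 1 := by
    rw [Matrix.mem_unitaryGroup_iff'.mp hU]; simp
  have h2 : ∑ k, ((starRingEnd ℂ) (U k j)) * U k j = 1 := by
    simpa [Matrix.mul_apply, Matrix.star_apply] using h1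
  have := congrArg Complex.re h2
  simpa [Complex.normSq] using this

lemma unitary_row_sum {n : Type*} [Fintype n] [DecidableEq n] {U : Matrix n n ℂ}
    (hU : U ∈ Matrix.unitaryGroup n ℂ) (k : n) : ∑ j, Complex.normSq (U k j) = 1 := by
  have h1 : (U * star U) k k = 1 := by
    rw [Matrix.mem_unitaryGroup_iff.mp hU]; simp
  have h2 : ∑ j, U k j * ((starRingEnd ℂ) (U k j)) = 1 := by
    simpa [Matrix.mul_apply, Matrix.star_apply] using h1
  have := congrArg Complex.re h2
  simpa [Complex.normSq, mul_comm] using this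

lemma psd_diag_re_nonneg {n : Type*} [Fintype n] [DecidableEq n] {M : Matrix n n ℂ}
    (hM : M.PosSemidef) (j : n) : 0 ≤ (M j j).re := by
  have := hM.re_dotProduct_nonneg (Pi.single j 1)
  simpa [dotProduct, Matrix.mulVec, Pi.single_apply] using this

lemma trace_eq_sum_eig {n : Type*} [Fintype n] [DecidableEq n] {ρ : Matrix n n ℂ}
    (h : ρ.IsHermitian) : ρ.trace = ((∑ i, h.eigenvalues i : ℝ) : ℂ) := by
  conv_lhs => rw [h.spectral_theorem, Unitary.conjStarAlgAut_apply]
  rw [Matrix.trace_mul_cycle]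
  rw [Unitary.coe_star_mul_self (Matrix.IsHermitian.eigenvectorUnitary h), one_mul]
  simp [Matrix.trace_diagonal]

/-- Pinching: the diagonal of a positive semidefinite matrix in any orthonormal basis has
Shannon entropy at least the von Neumann entropy. -/
lemma pinching {n : Type*} [Fintype n] [DecidableEq n] {σ : Matrix n n ℂ} (hσ : σ.PosSemidef)
    {W : Matrix n n ℂ} (hW : W ∈ Matrix.unitaryGroup n ℂ) :
    vN σ ≤ ∑ j, Real.negMulLog ((star W * σ * W) j j).re := by
  have hH := hσ.1
  set ev := hH.eigenvalues with hev
  set V : Matrix n n ℂ := (Matrix.IsHermitian.eigenvectorUnitary hH : Matrix n n ℂ) with hVdef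
  set U : Matrix n n ℂ := star V * W with hUdef
  have hVs : star V ∈ Matrix.unitaryGroup n ℂ := by
    rw [hVdef, ← Unitary.coe_star]
    exact (star (Matrix.IsHermitian.eigenvectorUnitary hH)).2
  have hUmem : U ∈ Matrix.unitaryGroup n ℂ := mul_mem hVs hW
  have hentry : ∀ j, ((star W * σ * W) j j).re = ∑ k, Complex.normSq (U k j) * ev k := by
    intro j
    have hmat : star W * σ * W = star U * Matrix.diagonal (RCLike.ofReal ∘ ev) * U := by
      conv_lhs => rw [hH.spectral_theorem, Unitary.conjStarAlgAut_apply]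
      rw [hUdef]
      simp only [star_mul, star_star, Matrix.mul_assoc, hVdef, hev]
    rw [hmat]
    have h2 : (star U * Matrix.diagonal ((RCLike.ofReal : ℝ → ℂ) ∘ ev) * U) j j
        = ∑ k, ((ev k : ℂ) * ((starRingEnd ℂ) (U k j) * U k j)) := by
      rw [Matrix.mul_assoc, Matrix.mul_apply]
      refine Finset.sum_congr rfl fun k _ => ?_
      rw [Matrix.diagonal_mul]
      simp only [Matrix.star_apply, Function.comp_apply, RCLike.star_def]
      rw [show ((RCLike.ofReal : ℝ → ℂ) (ev k)) = ((ev k : ℝ) : ℂ) from rfl]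
      ring
    rw [h2, Complex.re_sum]
    refine Finset.sum_congr rfl fun k _ => ?_
    rw [← Complex.normSq_eq_conj_mul_self, ← Complex.ofReal_mul]
    simp [mul_comm]
  calc vN σ = ∑ k, Real.negMulLog (ev k) := vN_eq hH
    _ = ∑ k, (∑ j, Complex.normSq (U k j)) * Real.negMulLog (ev k) := by
        simp [unitary_row_sum hUmem]
    _ = ∑ j, ∑ k, Complex.normSq (U k j) * Real.negMulLog (ev k) := by
        rw [Finset.sum_comm]
        simp [Finset.sum_mul]
    _ ≤ ∑ j, Real.negMulLog (∑ k, Complex.normSq (U k j) * ev k) := by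
        refine Finset.sum_le_sum fun j _ => jensen_negMulLog _ _
          (fun k => Complex.normSq_nonneg _) (unitary_col_sum hUmem j)
          (fun k => hσ.eigenvalues_nonneg k)
    _ = ∑ j, Real.negMulLog ((star W * σ * W) j j).re := by
        simp [hentry]

/-- Concavity of the von Neumann entropy. -/
lemma vN_concave {ι n : Type*} [Fintype ι] [Fintype n] [DecidableEq n]
    (w : ι → ℝ) (σ : ι → Matrix n n ℂ) (hw : ∀ i, 0 ≤ w i) (hw1 : ∑ i, w i = 1)
    (hσ : ∀ i, (σ i).PosSemidef) :
    ∑ i, w i * vN (σ i) ≤ vN (∑ i, (w i : ℂ) • σ i) := by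
  set ρ := ∑ i, (w i : ℂ) • σ i with hρ
  have hH : ρ.IsHermitian := by
    rw [hρ]
    unfold Matrix.IsHermitian
    rw [Matrix.conjTranspose_sum]
    refine Finset.sum_congr rfl fun i _ => ?_
    rw [Matrix.conjTranspose_smul, (hσ i).1.eq]
    norm_num
  set W : Matrix n n ℂ := (Matrix.IsHermitian.eigenvectorUnitary hH : Matrix n n ℂ) with hWdef
  have hWmem : W ∈ Matrix.unitaryGroup n ℂ := (Matrix.IsHermitian.eigenvectorUnitary hH).2
  have hlin : ∀ j, hH.eigenvalues j = ∑ i, w i * ((star W * σ i * W) j j).re := by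
    intro j
    have h1 : (star W * ρ * W) j j = ((hH.eigenvalues j : ℝ) : ℂ) := by
      rw [show star W * ρ * W = Matrix.diagonal (RCLike.ofReal ∘ hH.eigenvalues) by
        rw [← hH.conjStarAlgAut_star_eigenvectorUnitary, Unitary.conjStarAlgAut_apply,
          Unitary.coe_star, star_star]]
      simp [Matrix.diagonal_apply_eq]
    have h2 : star W * ρ * W = ∑ i, (w i : ℂ) • (star W * σ i * W) := by
      rw [hρ, Matrix.mul_sum, Matrix.sum_mul]
      refine Finset.sum_congr rfl fun i _ => ?_
      rw [mul_smul_comm, smul_mul_assoc]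
    have h3 : ((star W * ρ * W) j j).re = ∑ i, w i * ((star W * σ i * W) j j).re := by
      rw [h2, Matrix.sum_apply, Complex.re_sum]
      refine Finset.sum_congr rfl fun i _ => ?_
      rw [Matrix.smul_apply, smul_eq_mul, Complex.re_ofReal_mul]
    rw [← h3, h1, Complex.ofReal_re]
  have hd : ∀ i j, 0 ≤ ((star W * σ i * W) j j).re := fun i j =>
    psd_diag_re_nonneg (by
      simpa [Matrix.star_eq_conjTranspose] using (hσ i).conjTranspose_mul_mul_same W) j
  calc ∑ i, w i * vN (σ i)
      ≤ ∑ i, w i * ∑ j, Real.negMulLog ((star W * σ i * W) j j).re := by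
        exact Finset.sum_le_sum fun i _ =>
          mul_le_mul_of_nonneg_left (pinching (hσ i) hWmem) (hw i)
    _ = ∑ j, ∑ i, w i * Real.negMulLog ((star W * σ i * W) j j).re := by
        simp_rw [Finset.mul_sum]
        rw [Finset.sum_comm]
    _ ≤ ∑ j, Real.negMulLog (∑ i, w i * ((star W * σ i * W) j j).re) := by
        exact Finset.sum_le_sum fun j _ => jensen_negMulLog _ _ hw hw1 (fun i => hd i j)
    _ = vN ρ := by
        rw [vN_eq hH]
        exact (Finset.sum_congr rfl fun j _ => by rw [hlin j]).symm

lemma vecMulVec_star_posSemidef {n : Type*} [Fintype n] (v : n → ℂ) :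
    (Matrix.vecMulVec v (star v)).PosSemidef := by
  rw [Matrix.vecMulVec_eq (Fin 1), ← Matrix.conjTranspose_replicateCol]
  exact Matrix.posSemidef_self_mul_conjTranspose _

lemma ptraceB_vecMulVec_eq {A B : Type*} [Fintype A] [Fintype B] (φ : A × B → ℂ) :
    ptraceB (Matrix.vecMulVec φ (star φ))
      = ∑ b, Matrix.vecMulVec (fun a => φ (a, b)) (star (fun a => φ (a, b))) := by
  ext a a'
  simp [ptraceB, Matrix.vecMulVec_apply, Matrix.sum_apply, Pi.star_apply]

lemma ptraceB_vecMulVec_posSemidef {A B : Type*} [Fintype A] [Fintype B] (φ : A × B → ℂ) :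
    (ptraceB (Matrix.vecMulVec φ (star φ))).PosSemidef := by
  rw [ptraceB_vecMulVec_eq]
  exact Finset.sum_induction _ _ (fun a b ha hb => ha.add hb) Matrix.PosSemidef.zero
    (fun b _ => vecMulVec_star_posSemidef _)

lemma trace_ptraceB {A B : Type*} [Fintype A] [Fintype B] (M : Matrix (A × B) (A × B) ℂ) :
    (ptraceB M).trace = M.trace := by
  simp [Matrix.trace, ptraceB, Matrix.diag, Fintype.sum_prod_type]

lemma trace_ptraceC3 {A B C : Type*} [Fintype A] [Fintype B] [Fintype C]
    (M : Matrix (A × B × C) (A × B × C) ℂ) :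
    (ptraceC3 M).trace = M.trace := by
  simp [Matrix.trace, ptraceC3, Matrix.diag, Fintype.sum_prod_type]

lemma trace_vecMulVec_star {n : Type*} [Fintype n] (v : n → ℂ) :
    (Matrix.vecMulVec v (star v)).trace = ((∑ x, ‖v x‖ ^ 2 : ℝ) : ℂ) := by
  rw [Matrix.trace]
  push_cast
  refine Finset.sum_congr rfl fun x _ => ?_
  rw [Matrix.diag_apply, Matrix.vecMulVec_apply, Pi.star_apply]
  rw [show star (v x) = (starRingEnd ℂ) (v x) from rfl, Complex.mul_conj, ← Complex.sq_norm]
  norm_cast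

lemma vN_nonneg {n : Type*} [Fintype n] [DecidableEq n] {ρ : Matrix n n ℂ}
    (hP : ρ.PosSemidef) (htr : ρ.trace = 1) : 0 ≤ vN ρ := by
  rw [vN_eq hP.1]
  have hsum : ∑ i, hP.1.eigenvalues i = 1 := by
    have h := trace_eq_sum_eig hP.1
    rw [htr] at h
    exact_mod_cast h.symm
  refine Finset.sum_nonneg fun i _ => Real.negMulLog_nonneg (hP.eigenvalues_nonneg i) ?_
  calc hP.1.eigenvalues i ≤ ∑ j, hP.1.eigenvalues j :=
        Finset.single_le_sum (fun j _ => hP.eigenvalues_nonneg j) (Finset.mem_univ i)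
    _ = 1 := hsum

lemma ptraceB_smul {A B : Type*} [Fintype B] (c : ℂ) (M : Matrix (A × B) (A × B) ℂ) :
    ptraceB (c • M) = c • ptraceB M := by
  ext a a'
  simp [ptraceB, Finset.mul_sum]

lemma proj_entry {C : Type*} [Fintype C] [DecidableEq C] {P : Matrix C C ℂ} (hP : P.IsHermitian)
    (c' c : C) : P c' c = ∑ k, (hP.eigenvectorUnitary : Matrix C C ℂ) c' k *
      ((hP.eigenvalues k : ℝ) : ℂ) * (starRingEnd ℂ) ((hP.eigenvectorUnitary : Matrix C C ℂ) c k) := by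
  conv_lhs => rw [hP.spectral_theorem, Unitary.conjStarAlgAut_apply]
  rw [Matrix.mul_apply]
  refine Finset.sum_congr rfl fun k _ => ?_
  rw [Matrix.mul_diagonal, Matrix.star_apply]
  rfl

lemma key1 {A C : Type*} [Fintype A] [Fintype C] (Ψ : A × C → ℂ)
    (P : Matrix C C ℂ) (lam : C → ℝ) (hlam : ∀ k, 0 ≤ lam k) (u : Matrix C C ℂ)
    (hP : ∀ c' c, P c' c = ∑ k, u c' k * ((lam k : ℝ) : ℂ) * (starRingEnd ℂ) (u c k))
    (x y : A) :
    ∑ k, (((Real.sqrt (lam k) : ℝ) : ℂ) * ∑ c, Ψ (x, c) * (starRingEnd ℂ) (u c k)) *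
        (starRingEnd ℂ) (((Real.sqrt (lam k) : ℝ) : ℂ) * ∑ c, Ψ (y, c) * (starRingEnd ℂ) (u c k))
      = ∑ c, ∑ c', Ψ (x, c) * (starRingEnd ℂ) (Ψ (y, c')) * P c' c := by
  have hsq : ∀ k, ((Real.sqrt (lam k) : ℝ) : ℂ) * ((Real.sqrt (lam k) : ℝ) : ℂ)
      = ((lam k : ℝ) : ℂ) := fun k => by
    rw [← Complex.ofReal_mul, Real.mul_self_sqrt (hlam k)]
  have step : ∀ k, (((Real.sqrt (lam k) : ℝ) : ℂ) * ∑ c, Ψ (x, c) * (starRingEnd ℂ) (u c k)) *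
      (starRingEnd ℂ) (((Real.sqrt (lam k) : ℝ) : ℂ) * ∑ c, Ψ (y, c) * (starRingEnd ℂ) (u c k))
      = ∑ c, ∑ c', (Ψ (x, c) * (starRingEnd ℂ) (Ψ (y, c'))) *
          (u c' k * ((lam k : ℝ) : ℂ) * (starRingEnd ℂ) (u c k)) := by
    intro k
    rw [map_mul, map_sum]
    simp only [map_mul, RingHomCompTriple.comp_apply, Complex.conj_conj, Complex.conj_ofReal]
    rw [mul_mul_mul_comm, hsq, Finset.sum_mul_sum, Finset.mul_sum]
    refine Finset.sum_congr rfl fun c _ => ?_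
    rw [Finset.mul_sum]
    refine Finset.sum_congr rfl fun c' _ => ?_
    simp only [RingHom.id_apply]
    ring
  rw [Finset.sum_congr rfl (fun k _ => step k), Finset.sum_comm]
  refine Finset.sum_congr rfl fun c _ => ?_
  rw [Finset.sum_comm]
  refine Finset.sum_congr rfl fun c' _ => ?_
  rw [hP c' c, Finset.mul_sum]

lemma key2 {A B C : Type*} [Fintype A] [Fintype B] [Fintype C] [DecidableEq A] [DecidableEq C]
    (Ψ : A × B × C → ℂ) (P : Matrix C C ℂ) (hP2 : P * P = P) (a a' : A) :
    ptraceB (((1 : Matrix A A ℂ) ⊗ₖ P) * ptraceB3 (Matrix.vecMulVec Ψ (star Ψ))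
        * ((1 : Matrix A A ℂ) ⊗ₖ P)) a a'
      = ∑ b, ∑ c, ∑ c', Ψ (a, b, c) * (starRingEnd ℂ) (Ψ (a', b, c')) * P c' c := by
  have hPc : ∀ c₂ c₁ : C, (∑ c, P c₂ c * P c c₁) = P c₂ c₁ := by
    intro c₂ c₁
    have := congrFun (congrFun hP2 c₂) c₁
    simpa [Matrix.mul_apply] using this
  have hmid : ∀ (c₁ c₂ : C), ptraceB3 (Matrix.vecMulVec Ψ (star Ψ)) ((a, c₁)) ((a', c₂))
      = ∑ b, Ψ (a, b, c₁) * (starRingEnd ℂ) (Ψ (a', b, c₂)) := by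
    intro c₁ c₂
    simp [ptraceB3, Matrix.vecMulVec_apply, Pi.star_apply]
  -- expand LHS
  set M := ptraceB3 (Matrix.vecMulVec Ψ (star Ψ)) with hM
  have h1 : ∀ (c : C) (y : A × C), (((1 : Matrix A A ℂ) ⊗ₖ P) * M) ((a, c)) y
      = ∑ c₁, P c c₁ * M ((a, c₁)) y := by
    intro c y
    rw [Matrix.mul_apply, Fintype.sum_prod_type, Finset.sum_comm]
    simp [Matrix.kroneckerMap_apply, Matrix.one_apply, ite_mul, zero_mul]
  have h2 : ∀ (c : C), ((((1 : Matrix A A ℂ) ⊗ₖ P) * M) * ((1 : Matrix A A ℂ) ⊗ₖ P))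
        ((a, c)) ((a', c))
      = ∑ c₂, ∑ c₁, P c c₁ * M ((a, c₁)) ((a', c₂)) * P c₂ c := by
    intro c
    rw [Matrix.mul_apply, Fintype.sum_prod_type, Finset.sum_comm]
    simp only [Matrix.kroneckerMap_apply, Matrix.one_apply, mul_ite, mul_one, mul_zero,
      ite_mul, zero_mul, Finset.sum_ite_eq', Finset.mem_univ, if_true]
    refine Finset.sum_congr rfl fun c₂ _ => ?_
    rw [h1, Finset.sum_mul]
    simp [one_mul]
  have hexp : ptraceB (((1 : Matrix A A ℂ) ⊗ₖ P) * M * ((1 : Matrix A A ℂ) ⊗ₖ P)) a a'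
      = ∑ c, ∑ c₁, ∑ c₂, P c c₁ * M ((a, c₁)) ((a', c₂)) * P c₂ c := by
    show (∑ c, (((1 : Matrix A A ℂ) ⊗ₖ P) * M * ((1 : Matrix A A ℂ) ⊗ₖ P)) ((a, c)) ((a', c))) = _
    refine Finset.sum_congr rfl fun c _ => ?_
    rw [h2, Finset.sum_comm]
  rw [hexp]
  -- sum over c first, using hPc
  have hswap : ∑ c, ∑ c₁, ∑ c₂, P c c₁ * M ((a, c₁)) ((a', c₂)) * P c₂ c
      = ∑ c₁, ∑ c₂, M ((a, c₁)) ((a', c₂)) * P c₂ c₁ := by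
    rw [Finset.sum_comm]
    refine Finset.sum_congr rfl fun c₁ _ => ?_
    rw [Finset.sum_comm]
    refine Finset.sum_congr rfl fun c₂ _ => ?_
    rw [← hPc c₂ c₁, Finset.mul_sum]
    refine Finset.sum_congr rfl fun c _ => ?_
    ring
  rw [hswap]
  calc ∑ c₁, ∑ c₂, M ((a, c₁)) ((a', c₂)) * P c₂ c₁
      = ∑ c₁, ∑ c₂, ∑ b, Ψ (a, b, c₁) * (starRingEnd ℂ) (Ψ (a', b, c₂)) * P c₂ c₁ := by
        refine Finset.sum_congr rfl fun c₁ _ => Finset.sum_congr rfl fun c₂ _ => ?_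
        rw [hmid, Finset.sum_mul]
    _ = ∑ c₁, ∑ b, ∑ c₂, Ψ (a, b, c₁) * (starRingEnd ℂ) (Ψ (a', b, c₂)) * P c₂ c₁ := by
        refine Finset.sum_congr rfl fun c₁ _ => ?_
        rw [Finset.sum_comm]
    _ = ∑ b, ∑ c₁, ∑ c₂, Ψ (a, b, c₁) * (starRingEnd ℂ) (Ψ (a', b, c₂)) * P c₂ c₁ := by
        rw [Finset.sum_comm]

lemma key3 {A B C : Type*} [Fintype A] [Fintype B] [Fintype C] [DecidableEq A] [DecidableEq C]
    (Ψ : A × B × C → ℂ) (P : Matrix C C ℂ) :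
    (((1 : Matrix A A ℂ) ⊗ₖ P) * ptraceB3 (Matrix.vecMulVec Ψ (star Ψ))).trace
      = ∑ a, ∑ b, ∑ c, ∑ c', Ψ (a, b, c) * (starRingEnd ℂ) (Ψ (a, b, c')) * P c' c := by
  set M := ptraceB3 (Matrix.vecMulVec Ψ (star Ψ)) with hM
  have hmid : ∀ (a a' : A) (c₁ c₂ : C), M (a, c₁) (a', c₂)
      = ∑ b, Ψ (a, b, c₁) * (starRingEnd ℂ) (Ψ (a', b, c₂)) := by
    intro a a' c₁ c₂
    simp [hM, ptraceB3, Matrix.vecMulVec_apply, Pi.star_apply]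
  have h1 : ∀ (a : A) (c : C) (y : A × C), (((1 : Matrix A A ℂ) ⊗ₖ P) * M) ((a, c)) y
      = ∑ c₁, P c c₁ * M ((a, c₁)) y := by
    intro a c y
    rw [Matrix.mul_apply, Fintype.sum_prod_type, Finset.sum_comm]
    simp [Matrix.kroneckerMap_apply, Matrix.one_apply, ite_mul, zero_mul]
  rw [Matrix.trace, Fintype.sum_prod_type]
  refine Finset.sum_congr rfl fun a _ => ?_
  calc ∑ c', (((1 : Matrix A A ℂ) ⊗ₖ P) * M).diag ((a, c'))
      = ∑ c', ∑ c₁, ∑ b, P c' c₁ * (Ψ (a, b, c₁) * (starRingEnd ℂ) (Ψ (a, b, c'))) := by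
        refine Finset.sum_congr rfl fun c' _ => ?_
        rw [Matrix.diag_apply, h1]
        refine Finset.sum_congr rfl fun c₁ _ => ?_
        rw [hmid, Finset.mul_sum]
    _ = ∑ c', ∑ b, ∑ c₁, P c' c₁ * (Ψ (a, b, c₁) * (starRingEnd ℂ) (Ψ (a, b, c'))) := by
        refine Finset.sum_congr rfl fun c' _ => ?_
        rw [Finset.sum_comm]
    _ = ∑ b, ∑ c', ∑ c₁, P c' c₁ * (Ψ (a, b, c₁) * (starRingEnd ℂ) (Ψ (a, b, c'))) := by
        rw [Finset.sum_comm]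
    _ = ∑ b, ∑ c, ∑ c', Ψ (a, b, c) * (starRingEnd ℂ) (Ψ (a, b, c')) * P c' c := by
        refine Finset.sum_congr rfl fun b _ => ?_
        rw [Finset.sum_comm]
        exact Finset.sum_congr rfl fun c _ => Finset.sum_congr rfl fun c' _ => by ring

/-- Theorem 3: for a tripartite pure state `ρ_ABC = |Ψ⟩⟨Ψ|` and any
projective measurement `{Π_i}` on `C`, the entanglement of formation satisfies
`E_F(ρ_AB) ≤ ∑ᵢ pᵢ S(ρ_{A,i})` (sum over outcomes with `pᵢ > 0`). -/
theorem eof_upper_bound_post_measurement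
    (dA dB dC : ℕ)
    (Ψ : Fin dA × Fin dB × Fin dC → ℂ) (hΨ : ∑ v, ‖Ψ v‖ ^ 2 = 1)
    (ρABC : Matrix (Fin dA × Fin dB × Fin dC) (Fin dA × Fin dB × Fin dC) ℂ)
    (hρ : ρABC = Matrix.vecMulVec Ψ (star Ψ))
    (m : ℕ) (Pj : Fin m → Matrix (Fin dC) (Fin dC) ℂ)
    (hherm : ∀ i, (Pj i).IsHermitian) (hproj : ∀ i, Pj i * Pj i = Pj i)
    (hsum : ∑ i, Pj i = 1) :
    EoF (ptraceC3 ρABC) ≤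
      ∑ i ∈ Finset.univ.filter (fun i => 0 < measProb (ptraceB3 ρABC) (Pj i)),
        measProb (ptraceB3 ρABC) (Pj i) * vN (measState (ptraceB3 ρABC) (Pj i)) := by
  classical
  subst hρ
  -- nonemptiness
  have hne : Nonempty (Fin dA × Fin dB × Fin dC) := by
    by_contra h
    rw [not_nonempty_iff] at h
    rw [Finset.univ_eq_empty, Finset.sum_empty] at hΨ
    norm_num at hΨ
  obtain ⟨z₀⟩ := hne
  set x₀ : Fin dA × Fin dB := (z₀.1, z₀.2.1) with hx₀
  -- projectors are PSD
  have hPSD : ∀ i, (Pj i).PosSemidef := by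
    intro i
    have h1 := Matrix.posSemidef_conjTranspose_mul_self (Pj i)
    rwa [(hherm i).eq, hproj i] at h1
  -- spectral data of the projectors
  set lam : Fin m → Fin dC → ℝ := fun i => (hherm i).eigenvalues with hlamdef
  have hlam : ∀ i k, 0 ≤ lam i k := fun i k => (hPSD i).eigenvalues_nonneg k
  set U : Fin m → Matrix (Fin dC) (Fin dC) ℂ :=
    fun i => ((hherm i).eigenvectorUnitary : Matrix (Fin dC) (Fin dC) ℂ) with hUdef
  have hPentry : ∀ i c' c, Pj i c' c
      = ∑ k, U i c' k * ((lam i k : ℝ) : ℂ) * (starRingEnd ℂ) (U i c k) :=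
    fun i c' c => proj_entry (hherm i) c' c
  set Ψp : (Fin dA × Fin dB) × Fin dC → ℂ := fun z => Ψ (z.1.1, z.1.2, z.2) with hΨpdef
  -- the (unnormalized) ensemble vectors
  set φ : Fin m → Fin dC → (Fin dA × Fin dB → ℂ) := fun i k => fun x =>
    ((Real.sqrt (lam i k) : ℝ) : ℂ) * ∑ c, Ψp (x, c) * (starRingEnd ℂ) (U i c k) with hφdef
  have hkey1 : ∀ i (x y : Fin dA × Fin dB),
      ∑ k, φ i k x * (starRingEnd ℂ) (φ i k y)
        = ∑ c, ∑ c', Ψp (x, c) * (starRingEnd ℂ) (Ψp (y, c')) * Pj i c' c :=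
    fun i x y => key1 Ψp (Pj i) (lam i) (hlam i) (U i) (hPentry i) x y
  -- weights
  set q : Fin m → Fin dC → ℝ := fun i k => ∑ x, ‖φ i k x‖ ^ 2 with hqdef
  have hqnn : ∀ i k, 0 ≤ q i k := fun i k => Finset.sum_nonneg fun x _ => by positivity
  have hqC : ∀ i k, ((q i k : ℝ) : ℂ) = ∑ x, φ i k x * (starRingEnd ℂ) (φ i k x) := by
    intro i k
    have : ((q i k : ℝ) : ℂ) = ((∑ x, ‖φ i k x‖ ^ 2 : ℝ) : ℂ) := rfl
    rw [this]
    push_cast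
    refine Finset.sum_congr rfl fun x _ => ?_
    rw [Complex.mul_conj, ← Complex.sq_norm]
    norm_cast
  have hφ0 : ∀ i k, q i k = 0 → ∀ x, φ i k x = 0 := by
    intro i k h x
    have h' : ∑ x, ‖φ i k x‖ ^ 2 = 0 := h
    have h2 := (Finset.sum_eq_zero_iff_of_nonneg (fun x _ => by positivity)).mp h' x
      (Finset.mem_univ x)
    have h3 : ‖φ i k x‖ = 0 := by
      nlinarith [norm_nonneg (φ i k x)]
    simpa using h3
  -- normalized ensemble vectors
  set ψ : Fin m → Fin dC → (Fin dA × Fin dB → ℂ) := fun i k =>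
    if q i k = 0 then (fun x => if x = x₀ then 1 else 0)
    else fun x => (((Real.sqrt (q i k))⁻¹ : ℝ) : ℂ) * φ i k x with hψdef
  have hψnorm : ∀ i k, ∑ x, ‖ψ i k x‖ ^ 2 = 1 := by
    intro i k
    by_cases h : q i k = 0
    · have hψik : ψ i k = fun x => if x = x₀ then 1 else 0 := by rw [hψdef]; simp [h]
      rw [hψik]
      rw [Finset.sum_eq_single x₀]
      · simp
      · intro b _ hb; simp [hb]
      · intro hb; exact absurd (Finset.mem_univ _) hb
    · have hψik : ψ i k = fun x => (((Real.sqrt (q i k))⁻¹ : ℝ) : ℂ) * φ i k x := by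
        rw [hψdef]; simp [h]
      rw [hψik]
      have h1 : ∀ x : Fin dA × Fin dB, ‖(((Real.sqrt (q i k))⁻¹ : ℝ) : ℂ) * φ i k x‖ ^ 2
          = (Real.sqrt (q i k))⁻¹ ^ 2 * ‖φ i k x‖ ^ 2 := by
        intro x
        rw [norm_mul, mul_pow, Complex.norm_real, Real.norm_eq_abs,
          abs_of_nonneg (by positivity)]
      rw [Finset.sum_congr rfl fun x _ => h1 x, ← Finset.mul_sum]
      have h2 : ∑ x, ‖φ i k x‖ ^ 2 = q i k := rfl
      rw [h2, inv_pow, Real.sq_sqrt (hqnn i k), inv_mul_cancel₀ h]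
  have hφψ : ∀ i k x, φ i k x = ((Real.sqrt (q i k) : ℝ) : ℂ) * ψ i k x := by
    intro i k x
    by_cases h : q i k = 0
    · have hψik : ψ i k = fun x => if x = x₀ then 1 else 0 := by rw [hψdef]; simp [h]
      rw [hψik, hφ0 i k h x, h]
      simp
    · have hψik : ψ i k = fun x => (((Real.sqrt (q i k))⁻¹ : ℝ) : ℂ) * φ i k x := by
        rw [hψdef]; simp [h]
      rw [hψik]
      have hs : Real.sqrt (q i k) ≠ 0 := by
        intro h0
        exact h (by nlinarith [Real.sq_sqrt (hqnn i k), Real.sqrt_nonneg (q i k)])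
      rw [← mul_assoc, ← Complex.ofReal_mul, mul_inv_cancel₀ hs]
      simp
  have hrank1 : ∀ i k, ((q i k : ℝ) : ℂ) • Matrix.vecMulVec (ψ i k) (star (ψ i k))
      = Matrix.vecMulVec (φ i k) (star (φ i k)) := by
    intro i k
    ext x y
    rw [Matrix.smul_apply, Matrix.vecMulVec_apply, Matrix.vecMulVec_apply, Pi.star_apply,
      Pi.star_apply, hφψ i k x, hφψ i k y]
    have hq : ((q i k : ℝ) : ℂ) = ((Real.sqrt (q i k) : ℝ) : ℂ) * ((Real.sqrt (q i k) : ℝ) : ℂ) := by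
      rw [← Complex.ofReal_mul, Real.mul_self_sqrt (hqnn i k)]
    rw [smul_eq_mul, hq]
    simp only [star_mul', RCLike.star_def, Complex.conj_ofReal]
    ring
  -- the ensemble realizes ρ_AB
  have hens : ptraceC3 (Matrix.vecMulVec Ψ (star Ψ))
      = ∑ i, ∑ k, ((q i k : ℝ) : ℂ) • Matrix.vecMulVec (ψ i k) (star (ψ i k)) := by
    have hR : (∑ i, ∑ k, ((q i k : ℝ) : ℂ) • Matrix.vecMulVec (ψ i k) (star (ψ i k)))
        = ∑ i, ∑ k, Matrix.vecMulVec (φ i k) (star (φ i k)) :=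
      Finset.sum_congr rfl fun i _ => Finset.sum_congr rfl fun k _ => hrank1 i k
    rw [hR]
    ext x y
    have hL : ptraceC3 (Matrix.vecMulVec Ψ (star Ψ)) x y
        = ∑ c, Ψp (x, c) * (starRingEnd ℂ) (Ψp (y, c)) := by
      simp [ptraceC3, Matrix.vecMulVec_apply, Pi.star_apply, hΨpdef]
    rw [hL, Matrix.sum_apply]
    calc ∑ c, Ψp (x, c) * (starRingEnd ℂ) (Ψp (y, c))
        = ∑ c, ∑ c', Ψp (x, c) * (starRingEnd ℂ) (Ψp (y, c')) * (∑ i, Pj i) c' c := by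
          rw [hsum]
          refine Finset.sum_congr rfl fun c _ => ?_
          rw [Finset.sum_eq_single c]
          · simp [Matrix.one_apply]
          · intro c' _ hc'; simp [Matrix.one_apply, hc']
          · intro hc; exact absurd (Finset.mem_univ _) hc
      _ = ∑ c, ∑ c', ∑ i, Ψp (x, c) * (starRingEnd ℂ) (Ψp (y, c')) * Pj i c' c := by
          refine Finset.sum_congr rfl fun c _ => Finset.sum_congr rfl fun c' _ => ?_
          rw [Matrix.sum_apply, Finset.mul_sum]
      _ = ∑ c, ∑ i, ∑ c', Ψp (x, c) * (starRingEnd ℂ) (Ψp (y, c')) * Pj i c' c :=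
          Finset.sum_congr rfl fun c _ => Finset.sum_comm
      _ = ∑ i, ∑ c, ∑ c', Ψp (x, c) * (starRingEnd ℂ) (Ψp (y, c')) * Pj i c' c :=
          Finset.sum_comm
      _ = ∑ i, ∑ k, φ i k x * (starRingEnd ℂ) (φ i k y) := by
          exact Finset.sum_congr rfl fun i _ => (hkey1 i x y).symm
      _ = ∑ i, (∑ k, Matrix.vecMulVec (φ i k) (star (φ i k))) x y := by
          refine Finset.sum_congr rfl fun i _ => ?_
          rw [Matrix.sum_apply]
          exact Finset.sum_congr rfl fun k _ => by
            rw [Matrix.vecMulVec_apply, Pi.star_apply]; rfl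
  -- the weights sum to 1
  have htr1 : (ptraceC3 (Matrix.vecMulVec Ψ (star Ψ))).trace = 1 := by
    rw [trace_ptraceC3, trace_vecMulVec_star, hΨ]
    norm_num
  have hqsum1 : ∑ i, ∑ k, q i k = 1 := by
    have h2 := congrArg Matrix.trace hens
    rw [htr1, Matrix.trace_sum] at h2
    have h3 : ∀ i, (∑ k, ((q i k : ℝ) : ℂ) • Matrix.vecMulVec (ψ i k) (star (ψ i k))).trace
        = ((∑ k, q i k : ℝ) : ℂ) := by
      intro i
      rw [Matrix.trace_sum]
      push_cast
      refine Finset.sum_congr rfl fun k _ => ?_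
      rw [Matrix.trace_smul, trace_vecMulVec_star, hψnorm i k]
      simp
    rw [Finset.sum_congr rfl fun i _ => h3 i] at h2
    have h4 : ((∑ i, ∑ k, q i k : ℝ) : ℂ) = 1 := by
      exact_mod_cast h2.symm
    exact_mod_cast h4
  -- conditional states
  set σm : Fin m → Fin dC → Matrix (Fin dA) (Fin dA) ℂ :=
    fun i k => ptraceB (Matrix.vecMulVec (ψ i k) (star (ψ i k))) with hσdef
  have hσPSD : ∀ i k, (σm i k).PosSemidef := fun i k => ptraceB_vecMulVec_posSemidef _
  have hσtr : ∀ i k, (σm i k).trace = 1 := by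
    intro i k
    have : (σm i k).trace = (ptraceB (Matrix.vecMulVec (ψ i k) (star (ψ i k)))).trace := rfl
    rw [this, trace_ptraceB, trace_vecMulVec_star, hψnorm i k]
    norm_num
  -- probabilities
  have hp_eq : ∀ i, measProb (ptraceB3 (Matrix.vecMulVec Ψ (star Ψ))) (Pj i) = ∑ k, q i k := by
    intro i
    have h1 : (((1 : Matrix (Fin dA) (Fin dA) ℂ) ⊗ₖ Pj i)
        * ptraceB3 (Matrix.vecMulVec Ψ (star Ψ))).trace = ((∑ k, q i k : ℝ) : ℂ) := by
      rw [key3 Ψ (Pj i)]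
      calc ∑ a, ∑ b, ∑ c, ∑ c', Ψ (a, b, c) * (starRingEnd ℂ) (Ψ (a, b, c')) * Pj i c' c
          = ∑ a, ∑ b, ∑ k, φ i k (a, b) * (starRingEnd ℂ) (φ i k (a, b)) := by
            refine Finset.sum_congr rfl fun a _ => Finset.sum_congr rfl fun b _ => ?_
            exact (hkey1 i (a, b) (a, b)).symm
        _ = ∑ x : Fin dA × Fin dB, ∑ k, φ i k x * (starRingEnd ℂ) (φ i k x) := by
            rw [Fintype.sum_prod_type]
        _ = ∑ k, ∑ x : Fin dA × Fin dB, φ i k x * (starRingEnd ℂ) (φ i k x) := by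
            rw [Finset.sum_comm]
        _ = ((∑ k, q i k : ℝ) : ℂ) := by
            push_cast
            exact Finset.sum_congr rfl fun k _ => (hqC i k).symm
    rw [measProb, h1, Complex.ofReal_re]
  -- conditional state decomposition
  have hNi : ∀ i, ptraceB (((1 : Matrix (Fin dA) (Fin dA) ℂ) ⊗ₖ Pj i)
        * ptraceB3 (Matrix.vecMulVec Ψ (star Ψ))
        * ((1 : Matrix (Fin dA) (Fin dA) ℂ) ⊗ₖ Pj i))
      = ∑ k, ((q i k : ℝ) : ℂ) • σm i k := by
    intro i
    have hR : ∀ k, ((q i k : ℝ) : ℂ) • σm i k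
        = ptraceB (Matrix.vecMulVec (φ i k) (star (φ i k))) := by
      intro k
      have : ((q i k : ℝ) : ℂ) • σm i k
          = ptraceB (((q i k : ℝ) : ℂ) • Matrix.vecMulVec (ψ i k) (star (ψ i k))) := by
        rw [ptraceB_smul]
      rw [this, hrank1]
    ext a a'
    rw [key2 Ψ (Pj i) (hproj i) a a', Matrix.sum_apply]
    calc ∑ b, ∑ c, ∑ c', Ψ (a, b, c) * (starRingEnd ℂ) (Ψ (a', b, c')) * Pj i c' c
        = ∑ b, ∑ k, φ i k (a, b) * (starRingEnd ℂ) (φ i k (a', b)) := by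
          refine Finset.sum_congr rfl fun b _ => ?_
          exact (hkey1 i (a, b) (a', b)).symm
      _ = ∑ k, ∑ b, φ i k (a, b) * (starRingEnd ℂ) (φ i k (a', b)) := by
          rw [Finset.sum_comm]
      _ = ∑ k, (((q i k : ℝ) : ℂ) • σm i k) a a' := by
          refine Finset.sum_congr rfl fun k _ => ?_
          rw [hR k]
          rfl
  have hmeas : ∀ i, 0 < measProb (ptraceB3 (Matrix.vecMulVec Ψ (star Ψ))) (Pj i) →
      measState (ptraceB3 (Matrix.vecMulVec Ψ (star Ψ))) (Pj i)
        = ∑ k, (((q i k / measProb (ptraceB3 (Matrix.vecMulVec Ψ (star Ψ))) (Pj i) : ℝ)) : ℂ)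
            • σm i k := by
    intro i hpos
    rw [measState, hNi i, Finset.smul_sum]
    refine Finset.sum_congr rfl fun k _ => ?_
    rw [smul_smul]
    congr 1
    rw [Complex.ofReal_div]
    field_simp
  -- membership of the ensemble value in the EoF set
  have hmem : (∑ i, ∑ k, q i k * vN (σm i k)) ∈ { x : ℝ |
      ∃ (n : ℕ) (p : Fin n → ℝ) (ψ' : Fin n → (Fin dA × Fin dB → ℂ)),
      (∀ i, 0 ≤ p i) ∧ (∑ i, p i = 1) ∧ (∀ i, ∑ v, ‖ψ' i v‖ ^ 2 = 1) ∧
      ptraceC3 (Matrix.vecMulVec Ψ (star Ψ))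
        = ∑ i, (p i : ℂ) • Matrix.vecMulVec (ψ' i) (star (ψ' i)) ∧
      x = ∑ i, p i * vN (ptraceB (Matrix.vecMulVec (ψ' i) (star (ψ' i)))) } := by
    refine ⟨m * dC, fun j => q (finProdFinEquiv.symm j).1 (finProdFinEquiv.symm j).2,
      fun j => ψ (finProdFinEquiv.symm j).1 (finProdFinEquiv.symm j).2, ?_, ?_, ?_, ?_, ?_⟩
    · intro j; exact hqnn _ _
    · rw [Equiv.sum_comp (finProdFinEquiv.symm) (fun z : Fin m × Fin dC => q z.1 z.2),
        Fintype.sum_prod_type]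
      exact hqsum1
    · intro j; exact hψnorm _ _
    · rw [Equiv.sum_comp (finProdFinEquiv.symm) (fun z : Fin m × Fin dC =>
        ((q z.1 z.2 : ℝ) : ℂ) • Matrix.vecMulVec (ψ z.1 z.2) (star (ψ z.1 z.2))),
        Fintype.sum_prod_type]
      exact hens
    · rw [Equiv.sum_comp (finProdFinEquiv.symm) (fun z : Fin m × Fin dC =>
        q z.1 z.2 * vN (ptraceB (Matrix.vecMulVec (ψ z.1 z.2) (star (ψ z.1 z.2))))),
        Fintype.sum_prod_type]
  -- the EoF set is bounded below by 0
  have hbdd : BddBelow { x : ℝ |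
      ∃ (n : ℕ) (p : Fin n → ℝ) (ψ' : Fin n → (Fin dA × Fin dB → ℂ)),
      (∀ i, 0 ≤ p i) ∧ (∑ i, p i = 1) ∧ (∀ i, ∑ v, ‖ψ' i v‖ ^ 2 = 1) ∧
      ptraceC3 (Matrix.vecMulVec Ψ (star Ψ))
        = ∑ i, (p i : ℂ) • Matrix.vecMulVec (ψ' i) (star (ψ' i)) ∧
      x = ∑ i, p i * vN (ptraceB (Matrix.vecMulVec (ψ' i) (star (ψ' i)))) } := by
    refine ⟨0, fun x hx => ?_⟩
    obtain ⟨n, p', ψ', hp0, _, hnorm, _, hxval⟩ := hx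
    rw [hxval]
    refine Finset.sum_nonneg fun j _ => mul_nonneg (hp0 j)
      (vN_nonneg (ptraceB_vecMulVec_posSemidef _) ?_)
    rw [trace_ptraceB, trace_vecMulVec_star, hnorm j]
    norm_num
  have hEoF : EoF (ptraceC3 (Matrix.vecMulVec Ψ (star Ψ))) ≤ ∑ i, ∑ k, q i k * vN (σm i k) :=
    csInf_le hbdd hmem
  refine le_trans hEoF ?_
  rw [Finset.sum_filter]
  refine Finset.sum_le_sum fun i _ => ?_
  by_cases hpos : 0 < measProb (ptraceB3 (Matrix.vecMulVec Ψ (star Ψ))) (Pj i)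
  · rw [if_pos hpos]
    set pI := measProb (ptraceB3 (Matrix.vecMulVec Ψ (star Ψ))) (Pj i) with hpI
    have hw1 : ∑ k, q i k / pI = 1 := by
      rw [← Finset.sum_div, ← hp_eq i, div_self (ne_of_gt hpos)]
    have hconc := vN_concave (fun k => q i k / pI) (σm i)
      (fun k => div_nonneg (hqnn i k) (le_of_lt hpos)) hw1 (fun k => hσPSD i k)
    rw [← hmeas i hpos] at hconc
    calc ∑ k, q i k * vN (σm i k)
        = pI * ∑ k, (q i k / pI) * vN (σm i k) := by
          rw [Finset.mul_sum]
          refine Finset.sum_congr rfl fun k _ => ?_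
          field_simp
      _ ≤ pI * vN (measState (ptraceB3 (Matrix.vecMulVec Ψ (star Ψ))) (Pj i)) :=
          mul_le_mul_of_nonneg_left hconc (le_of_lt hpos)
  · rw [if_neg hpos]
    have hple : measProb (ptraceB3 (Matrix.vecMulVec Ψ (star Ψ))) (Pj i) ≤ 0 :=
      le_of_not_gt hpos
    have hz : ∀ k, q i k = 0 := by
      intro k
      have h1 : ∑ k, q i k ≤ 0 := by rw [← hp_eq i]; exact hple
      have h2 : 0 ≤ ∑ k, q i k := Finset.sum_nonneg fun k _ => hqnn i k
      exact (Finset.sum_eq_zero_iff_of_nonneg (fun k _ => hqnn i k)).mp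
        (le_antisymm h1 h2) k (Finset.mem_univ k)
    simp [hz]
end

section
/- For a pure bipartite state, the entanglement of formation equals the local von Neumann entropy: if ρ_AB = |ψ⟩⟨ψ| for a unit vector |ψ⟩ ∈ ℂ^{d_A} ⊗ ℂ^{d_B}, then E_F(ρ_AB) = S(ρ_A), where ρ_A = Tr_B[ρ_AB]. -/
open scoped Kronecker ComplexOrder

section aux
variable {ι : Type*} [Fintype ι]

noncomputable def inn (a b : ι → ℂ) : ℂ := ∑ v, star (a v) * b v

lemma inn_self (a : ι → ℂ) : inn a a = ((∑ v, ‖a v‖ ^ 2 : ℝ) : ℂ) := by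
  simp only [inn]
  push_cast
  refine Finset.sum_congr rfl fun v _ => ?_
  rw [mul_comm, (by rfl : star (a v) = (starRingEnd ℂ) (a v)), Complex.mul_conj']

lemma inn_sub_right (a x y : ι → ℂ) : inn a (x - y) = inn a x - inn a y := by
  simp [inn, mul_sub, Finset.sum_sub_distrib]

lemma inn_smul_right (a x : ι → ℂ) (c : ℂ) : inn a (c • x) = c * inn a x := by
  simp [inn, Finset.mul_sum]; refine Finset.sum_congr rfl fun v _ => by ring

lemma inn_conj (a b : ι → ℂ) : inn a b = star (inn b a) := by
  simp [inn]; refine Finset.sum_congr rfl fun v _ => by ring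

lemma inn_sub_left (x y b : ι → ℂ) : inn (x - y) b = inn x b - inn y b := by
  simp [inn, sub_mul, Finset.sum_sub_distrib]

lemma inn_smul_left (x b : ι → ℂ) (c : ℂ) : inn (c • x) b = star c * inn x b := by
  simp [inn, Finset.mul_sum]; refine Finset.sum_congr rfl fun v _ => by ring

lemma quad (a w : ι → ℂ) :
    dotProduct (star w) ((Matrix.vecMulVec a (star a)).mulVec w)
      = inn w a * inn a w := by
  simp only [inn, Matrix.mulVec, dotProduct, Matrix.vecMulVec_apply, Pi.star_apply,
    Finset.mul_sum, Finset.sum_mul]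
  rw [Finset.sum_comm]
  exact Finset.sum_congr rfl fun x _ => Finset.sum_congr rfl fun y _ => by ring

lemma quad_sum {n : ℕ} (A : Fin n → Matrix ι ι ℂ) (w : ι → ℂ) :
    dotProduct (star w) ((∑ j, A j).mulVec w)
      = ∑ j, dotProduct (star w) ((A j).mulVec w) := by
  have h1 : (∑ j, A j).mulVec w = ∑ j, (A j).mulVec w :=
    map_sum (Matrix.mulVec.addMonoidHomLeft w) A Finset.univ
  rw [h1]
  simp only [dotProduct, Finset.sum_apply, Finset.mul_sum]
  exact Finset.sum_comm

lemma key (ψ : ι → ℂ) (hψ : ∑ v, ‖ψ v‖ ^ 2 = 1)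
    {n : ℕ} (p : Fin n → ℝ) (φ : Fin n → ι → ℂ)
    (hp : ∀ i, 0 ≤ p i) (hns : ∀ i, ∑ v, ‖φ i v‖ ^ 2 = 1)
    (heq : Matrix.vecMulVec ψ (star ψ) = ∑ i, (p i : ℂ) • Matrix.vecMulVec (φ i) (star (φ i)))
    (i : Fin n) (hpi : 0 < p i) :
    Matrix.vecMulVec (φ i) (star (φ i)) = Matrix.vecMulVec ψ (star ψ) := by
  set c : ℂ := inn ψ (φ i) with hc
  set w : ι → ℂ := φ i - c • ψ with hw
  have hψψ : inn ψ ψ = 1 := by rw [inn_self, hψ]; norm_num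
  have hφφ : inn (φ i) (φ i) = 1 := by rw [inn_self, hns i]; norm_num
  have hinnψw : inn ψ w = 0 := by
    rw [hw, inn_sub_right, inn_smul_right, hψψ, mul_one, ← hc, sub_self]
  have hQ : inn w ψ * inn ψ w = ∑ j, (p j : ℂ) * (inn w (φ j) * inn (φ j) w) := by
    have h2 := congrArg (fun M : Matrix ι ι ℂ =>
      dotProduct (star w) (M.mulVec w)) heq
    simp only [quad] at h2
    rw [h2, quad_sum]
    refine Finset.sum_congr rfl fun j _ => ?_
    rw [Matrix.smul_mulVec, dotProduct_smul, quad, smul_eq_mul]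
  have hsum0 : (∑ j, ((p j * Complex.normSq (inn (φ j) w) : ℝ) : ℂ)) = 0 := by
    have hz : inn w ψ * inn ψ w = 0 := by rw [hinnψw, mul_zero]
    rw [← hz, hQ]
    refine Finset.sum_congr rfl fun j _ => ?_
    push_cast
    rw [inn_conj w (φ j)]
    simp [Complex.star_def, ← Complex.normSq_eq_conj_mul_self]
  have hreal : ∑ j, p j * Complex.normSq (inn (φ j) w) = 0 := by exact_mod_cast hsum0
  have hterm : p i * Complex.normSq (inn (φ i) w) = 0 := by
    have := (Finset.sum_eq_zero_iff_of_nonneg (fun j _ =>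
      mul_nonneg (hp j) (Complex.normSq_nonneg _))).mp hreal i (Finset.mem_univ i)
    exact this
  have ht : inn (φ i) w = 0 := by
    have : Complex.normSq (inn (φ i) w) = 0 := by
      rcases mul_eq_zero.mp hterm with h | h
      · exact absurd h (ne_of_gt hpi)
      · exact h
    exact Complex.normSq_eq_zero.mp this
  have hcc : c * star c = 1 := by
    have h3 : inn (φ i) w = 1 - c * star c := by
      rw [hw, inn_sub_right, inn_smul_right, hφφ, inn_conj (φ i) ψ, ← hc]
    rw [ht] at h3
    linear_combination h3
  have hww : inn w w = 0 := by
    nth_rewrite 1 [hw]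
    rw [inn_sub_left, inn_smul_left, ht, hinnψw, mul_zero, sub_zero]
  have hw0 : w = 0 := by
    have hws : ∑ v, ‖w v‖ ^ 2 = 0 := by
      have := (inn_self w).symm.trans hww
      exact_mod_cast this
    funext v
    have hv := (Finset.sum_eq_zero_iff_of_nonneg (fun v _ => sq_nonneg ‖w v‖)).mp hws v
      (Finset.mem_univ v)
    have : ‖w v‖ = 0 := by
      have := pow_eq_zero_iff (n := 2) (by norm_num) |>.mp hv
      exact this
    simpa using norm_eq_zero.mp this
  have hφeq : φ i = c • ψ := by
    have : φ i - c • ψ = 0 := hw ▸ hw0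
    exact sub_eq_zero.mp this
  rw [hφeq]
  ext x y
  simp only [Matrix.vecMulVec_apply, Pi.smul_apply, Pi.star_apply, smul_eq_mul, star_mul']
  calc c * ψ x * ((star c) * star (ψ y)) = (c * star c) * (ψ x * star (ψ y)) := by ring
    _ = ψ x * star (ψ y) := by rw [hcc, one_mul]

end aux

/-- for a pure bipartite state `ρ_AB = |ψ⟩⟨ψ|`, the entanglement of
formation equals the local von Neumann entropy: `E_F(ρ_AB) = S(ρ_A)`. -/
theorem eof_pure_state_eq_local_entropy
    (dA dB : ℕ) (ψ : Fin dA × Fin dB → ℂ) (hψ : ∑ v, ‖ψ v‖ ^ 2 = 1) :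
    EoF (Matrix.vecMulVec ψ (star ψ)) =
      vN (ptraceB (Matrix.vecMulVec ψ (star ψ))) := by
  set S := vN (ptraceB (Matrix.vecMulVec ψ (star ψ))) with hS
  rw [EoF]
  have hset : { x : ℝ | ∃ (n : ℕ) (p : Fin n → ℝ) (φ : Fin n → (Fin dA × Fin dB → ℂ)),
      (∀ i, 0 ≤ p i) ∧ (∑ i, p i = 1) ∧ (∀ i, ∑ v, ‖φ i v‖ ^ 2 = 1) ∧
      Matrix.vecMulVec ψ (star ψ) = ∑ i, (p i : ℂ) • Matrix.vecMulVec (φ i) (star (φ i)) ∧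
      x = ∑ i, p i * vN (ptraceB (Matrix.vecMulVec (φ i) (star (φ i)))) } = {S} := by
    apply Set.eq_singleton_iff_unique_mem.mpr
    constructor
    · exact ⟨1, fun _ => 1, fun _ => ψ, fun _ => zero_le_one, by simp, fun _ => hψ,
        by simp, by simp [hS]⟩
    · rintro x ⟨n, p, φ, hp, hco, hns, heq, rfl⟩
      have hterm : ∀ i, p i * vN (ptraceB (Matrix.vecMulVec (φ i) (star (φ i)))) = p i * S := by
        intro i
        rcases eq_or_lt_of_le (hp i) with h | h
        · rw [← h]; ring
        · rw [key ψ hψ p φ hp hns heq i h]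
      rw [Finset.sum_congr rfl fun i _ => hterm i, ← Finset.sum_mul, hco, one_mul]
  rw [hset, csInf_singleton]
end
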